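/- arXiv:1903.02353 — 6 statements merged into one kernel-verified Lean document; each statement's English description precedes it below -/
import Mathlib

section
/- For all continuous curves P, Q : [0,1] → ℝ^d and every positive integer k, the chain of inequalities δ_H(P,Q) ≤ δ_kF(P,Q) ≤ δ_wF(P,Q) ≤ δ_F(P,Q) holds. -/
open Set Metric

noncomputable section

/-- The free space of two curves `P, Q : ℝ → ℝ^d` (restricted to the parameter
domain `[0,1] × [0,1]`) at distance threshold `ε`. -/
def freeSpace (d : ℕ) (P Q : ℝ → EuclideanSpace ℝ (Fin d)) (ε : ℝ) : Set (ℝ × ℝ) :=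
  {p | p ∈ Icc (0:ℝ) 1 ×ˢ Icc (0:ℝ) 1 ∧ ‖P p.1 - Q p.2‖ ≤ ε}

/-- A subset of `[0,1] × [0,1]` covers both parameter spaces if both of its
coordinate projections equal `[0,1]`. -/
def CoversBoth (S : Set (ℝ × ℝ)) : Prop :=
  Prod.fst '' S = Icc (0:ℝ) 1 ∧ Prod.snd '' S = Icc (0:ℝ) 1

/-- `c` is a connected component of the set `F`. -/
def IsComponentOf (F c : Set (ℝ × ℝ)) : Prop :=
  ∃ x ∈ F, c = connectedComponentIn F x

/-- The `k`-Fréchet distance: the infimum over all `ε ≥ 0` such that at most `k`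
connected components of the free space cover both parameter spaces. -/
def kFrechetDist (d : ℕ) (k : ℕ) (P Q : ℝ → EuclideanSpace ℝ (Fin d)) : ℝ :=
  sInf {ε : ℝ | 0 ≤ ε ∧ ∃ S : Set (Set (ℝ × ℝ)),
    (∀ c ∈ S, IsComponentOf (freeSpace d P Q ε) c) ∧ S.Finite ∧ S.ncard ≤ k ∧
    CoversBoth (⋃₀ S)}

/-- A reparametrization: a continuous surjection of `[0,1]` onto itself. -/
def IsReparam (σ : ℝ → ℝ) : Prop :=
  ContinuousOn σ (Icc 0 1) ∧ σ '' Icc (0:ℝ) 1 = Icc (0:ℝ) 1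

/-- The weak Fréchet distance. -/
def weakFrechetDist (d : ℕ) (P Q : ℝ → EuclideanSpace ℝ (Fin d)) : ℝ :=
  sInf {r : ℝ | ∃ σ τ : ℝ → ℝ, IsReparam σ ∧ IsReparam τ ∧
    r = ⨆ t : Icc (0:ℝ) 1, ‖P (σ ↑t) - Q (τ ↑t)‖}

/-- An orientation-preserving homeomorphism of `[0,1]`: a continuous bijection of
`[0,1]` onto itself fixing the endpoints. -/
def IsOrientedHomeo (σ : ℝ → ℝ) : Prop :=
  ContinuousOn σ (Icc 0 1) ∧ Set.BijOn σ (Icc (0:ℝ) 1) (Icc (0:ℝ) 1) ∧ σ 0 = 0 ∧ σ 1 = 1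

/-- The (strong) Fréchet distance. -/
def frechetDist (d : ℕ) (P Q : ℝ → EuclideanSpace ℝ (Fin d)) : ℝ :=
  sInf {r : ℝ | ∃ σ : ℝ → ℝ, IsOrientedHomeo σ ∧
    r = ⨆ t : Icc (0:ℝ) 1, ‖P ↑t - Q (σ ↑t)‖}

/-- The Hausdorff distance between the images of the two curves. -/
def hausdorffD (d : ℕ) (P Q : ℝ → EuclideanSpace ℝ (Fin d)) : ℝ :=
  Metric.hausdorffDist (P '' Icc (0:ℝ) 1) (Q '' Icc (0:ℝ) 1)

/-- For all continuous curves `P, Q : [0,1] → ℝ^d` and every positive integer `k`,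
`δ_H(P,Q) ≤ δ_kF(P,Q) ≤ δ_wF(P,Q) ≤ δ_F(P,Q)`. -/
theorem hausdorff_le_kFrechet_le_weakFrechet_le_frechet
    (d : ℕ) (P Q : ℝ → EuclideanSpace ℝ (Fin d))
    (hP : ContinuousOn P (Icc 0 1)) (hQ : ContinuousOn Q (Icc 0 1))
    (k : ℕ) (hk : 1 ≤ k) :
    hausdorffD d P Q ≤ kFrechetDist d k P Q ∧
    kFrechetDist d k P Q ≤ weakFrechetDist d P Q ∧
    weakFrechetDist d P Q ≤ frechetDist d P Q := by

  have h01 : (0:ℝ) ∈ Icc (0:ℝ) 1 := by norm_num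
  -- the three defining sets
  set kSet : Set ℝ := {ε : ℝ | 0 ≤ ε ∧ ∃ S : Set (Set (ℝ × ℝ)),
    (∀ c ∈ S, IsComponentOf (freeSpace d P Q ε) c) ∧ S.Finite ∧ S.ncard ≤ k ∧
    CoversBoth (⋃₀ S)} with hkSet
  set wSet : Set ℝ := {r : ℝ | ∃ σ τ : ℝ → ℝ, IsReparam σ ∧ IsReparam τ ∧
    r = ⨆ t : Icc (0:ℝ) 1, ‖P (σ ↑t) - Q (τ ↑t)‖} with hwSet
  set fSet : Set ℝ := {r : ℝ | ∃ σ : ℝ → ℝ, IsOrientedHomeo σ ∧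
    r = ⨆ t : Icc (0:ℝ) 1, ‖P ↑t - Q (σ ↑t)‖} with hfSet
  have hidRep : IsReparam id := ⟨continuousOn_id, image_id _⟩
  have hfNe : fSet.Nonempty :=
    ⟨_, id, ⟨continuousOn_id, Set.bijOn_id _, rfl, rfl⟩, rfl⟩
  have hfw : fSet ⊆ wSet := by
    rintro r ⟨σ, hσ, hr⟩
    exact ⟨id, σ, hidRep, ⟨hσ.1, hσ.2.1.image_eq⟩, hr⟩
  have hwNe : wSet.Nonempty := ⟨_, hfw hfNe.choose_spec⟩
  have hwBdd : BddBelow wSet := by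
    refine ⟨0, ?_⟩
    rintro r ⟨σ, τ, hσ, hτ, rfl⟩
    exact Real.iSup_nonneg fun t => norm_nonneg _
  have hkBdd : BddBelow kSet := ⟨0, fun ε hε => hε.1⟩
  -- weak set is contained in the k-Fréchet set
  have hwk : wSet ⊆ kSet := by
    rintro r ⟨σ, τ, hσ, hτ, rfl⟩
    have hσm : MapsTo σ (Icc (0:ℝ) 1) (Icc (0:ℝ) 1) := fun x hx => by
      rw [← hσ.2]; exact mem_image_of_mem σ hx
    have hτm : MapsTo τ (Icc (0:ℝ) 1) (Icc (0:ℝ) 1) := fun x hx => by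
      rw [← hτ.2]; exact mem_image_of_mem τ hx
    have hcg : ContinuousOn (fun t => ‖P (σ t) - Q (τ t)‖) (Icc (0:ℝ) 1) :=
      ((hP.comp hσ.1 hσm).sub (hQ.comp hτ.1 hτm)).norm
    have hbdd : BddAbove (range fun t : Icc (0:ℝ) 1 => ‖P (σ ↑t) - Q (τ ↑t)‖) := by
      have : (range fun t : Icc (0:ℝ) 1 => ‖P (σ ↑t) - Q (τ ↑t)‖)
          = (fun t => ‖P (σ t) - Q (τ t)‖) '' Icc (0:ℝ) 1 :=
        (image_eq_range (fun t => ‖P (σ t) - Q (τ t)‖) (Icc (0:ℝ) 1)).symm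
      rw [this]
      exact (isCompact_Icc.image_of_continuousOn hcg).bddAbove
    set r := ⨆ t : Icc (0:ℝ) 1, ‖P (σ ↑t) - Q (τ ↑t)‖ with hrdef
    have hr0 : 0 ≤ r := Real.iSup_nonneg fun t => norm_nonneg _
    have hle : ∀ t ∈ Icc (0:ℝ) 1, ‖P (σ t) - Q (τ t)‖ ≤ r := fun t ht =>
      le_ciSup hbdd (⟨t, ht⟩ : Icc (0:ℝ) 1)
    have hx0 : (σ 0, τ 0) ∈ freeSpace d P Q r :=
      ⟨⟨hσm h01, hτm h01⟩, hle 0 h01⟩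
    set C : Set (ℝ × ℝ) := connectedComponentIn (freeSpace d P Q r) (σ 0, τ 0) with hC
    set γ : Set (ℝ × ℝ) := (fun t => (σ t, τ t)) '' Icc (0:ℝ) 1 with hγ
    have hγconn : IsPreconnected γ :=
      isPreconnected_Icc.image _ (hσ.1.prodMk hτ.1)
    have hγsub : γ ⊆ freeSpace d P Q r := by
      rintro _ ⟨t, ht, rfl⟩
      exact ⟨⟨hσm ht, hτm ht⟩, hle t ht⟩
    have hγC : γ ⊆ C :=
      hγconn.subset_connectedComponentIn ⟨0, h01, rfl⟩ hγsub
    have hCF : C ⊆ freeSpace d P Q r := connectedComponentIn_subset _ _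
    refine ⟨hr0, {C}, ?_, finite_singleton _, ?_, ?_⟩
    · rintro c rfl
      exact ⟨(σ 0, τ 0), hx0, rfl⟩
    · rw [ncard_singleton]; exact hk
    · rw [sUnion_singleton]
      constructor
      · apply Subset.antisymm
        · rintro _ ⟨p, hp, rfl⟩
          exact (hCF hp).1.1
        · intro s hs
          rw [← hσ.2] at hs
          obtain ⟨t, ht, rfl⟩ := hs
          exact ⟨(σ t, τ t), hγC ⟨t, ht, rfl⟩, rfl⟩
      · apply Subset.antisymm
        · rintro _ ⟨p, hp, rfl⟩
          exact (hCF hp).1.2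
        · intro s hs
          rw [← hτ.2] at hs
          obtain ⟨t, ht, rfl⟩ := hs
          exact ⟨(σ t, τ t), hγC ⟨t, ht, rfl⟩, rfl⟩
  -- the k-Fréchet set is nonempty
  have hkNe : kSet.Nonempty := by
    have hcont : ContinuousOn (fun p : ℝ × ℝ => ‖P p.1 - Q p.2‖)
        (Icc (0:ℝ) 1 ×ˢ Icc (0:ℝ) 1) :=
      ((hP.comp continuous_fst.continuousOn fun p hp => hp.1).sub
        (hQ.comp continuous_snd.continuousOn fun p hp => hp.2)).norm
    have hcomp : IsCompact ((fun p : ℝ × ℝ => ‖P p.1 - Q p.2‖) ''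
        (Icc (0:ℝ) 1 ×ˢ Icc (0:ℝ) 1)) :=
      (isCompact_Icc.prod isCompact_Icc).image_of_continuousOn hcont
    obtain ⟨M, hM⟩ := hcomp.bddAbove
    set ε0 := max M 0 with hε0
    have hF : freeSpace d P Q ε0 = Icc (0:ℝ) 1 ×ˢ Icc (0:ℝ) 1 := by
      apply Subset.antisymm
      · exact fun p hp => hp.1
      · intro p hp
        exact ⟨hp, le_trans (hM (mem_image_of_mem _ hp)) (le_max_left _ _)⟩
    have hpre : IsPreconnected (Icc (0:ℝ) 1 ×ˢ Icc (0:ℝ) 1) :=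
      isPreconnected_Icc.prod isPreconnected_Icc
    have h00 : ((0:ℝ), (0:ℝ)) ∈ freeSpace d P Q ε0 := by
      rw [hF]; exact ⟨h01, h01⟩
    set C0 := connectedComponentIn (freeSpace d P Q ε0) (0, 0) with hC0
    have hC0eq : C0 = Icc (0:ℝ) 1 ×ˢ Icc (0:ℝ) 1 := by
      apply Subset.antisymm
      · rw [← hF]; exact connectedComponentIn_subset _ _
      · rw [← hF] at hpre ⊢
        exact hpre.subset_connectedComponentIn h00 (Subset.refl _)
    refine ⟨ε0, le_max_right _ _, {C0}, ?_, finite_singleton _, ?_, ?_⟩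
    · rintro c rfl
      exact ⟨(0, 0), h00, rfl⟩
    · rw [ncard_singleton]; exact hk
    · rw [sUnion_singleton, hC0eq]
      exact ⟨fst_image_prod _ ⟨0, h01⟩, snd_image_prod ⟨0, h01⟩ _⟩
  -- Hausdorff distance is a lower bound for the k-Fréchet set
  have hHlb : ∀ ε ∈ kSet, hausdorffD d P Q ≤ ε := by
    rintro ε ⟨hε0, S, hScomp, hSfin, hScard, hfst, hsnd⟩
    have hUsub : ⋃₀ S ⊆ freeSpace d P Q ε := by
      apply sUnion_subset
      intro c hc
      obtain ⟨x, hx, rfl⟩ := hScomp c hc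
      exact connectedComponentIn_subset _ _
    apply hausdorffDist_le_of_mem_dist hε0
    · rintro _ ⟨s, hs, rfl⟩
      rw [← hfst] at hs
      obtain ⟨p, hp, rfl⟩ := hs
      have hpF := hUsub hp
      exact ⟨Q p.2, mem_image_of_mem _ hpF.1.2, by rw [dist_eq_norm]; exact hpF.2⟩
    · rintro _ ⟨t, ht, rfl⟩
      rw [← hsnd] at ht
      obtain ⟨p, hp, rfl⟩ := ht
      have hpF := hUsub hp
      refine ⟨P p.1, mem_image_of_mem _ hpF.1.1, ?_⟩
      rw [dist_comm, dist_eq_norm]; exact hpF.2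
  refine ⟨le_csInf hkNe hHlb, csInf_le_csInf hkBdd hwNe hwk, csInf_le_csInf hwBdd hfNe hfw⟩
end
end

section
/- Let P, Q : [0,1] → ℝ^d be continuous curves, ε ≥ 0, and suppose σ, τ : [0,1] → [0,1] are continuous surjections with ‖P(σ(t)) − Q(τ(t))‖ ≤ ε for all t ∈ [0,1]. Then there is a single connected component of the free space F_ε(P,Q) that covers both parameter spaces (namely the component containing the connected set {(σ(t), τ(t)) : t ∈ [0,1]}). Consequently δ_1F(P,Q) ≤ δ_wF(P,Q). -/
open Set Metric

noncomputable section

lemma key_component (d : ℕ) (P Q : ℝ → EuclideanSpace ℝ (Fin d))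
    (ε : ℝ) (σ τ : ℝ → ℝ) (hσ : IsReparam σ) (hτ : IsReparam τ)
    (hle : ∀ t ∈ Icc (0:ℝ) 1, ‖P (σ t) - Q (τ t)‖ ≤ ε) :
    ∃ x ∈ freeSpace d P Q ε,
      (fun t => (σ t, τ t)) '' Icc (0:ℝ) 1 ⊆ connectedComponentIn (freeSpace d P Q ε) x ∧
      CoversBoth (connectedComponentIn (freeSpace d P Q ε) x) := by
  have hσmem : ∀ t ∈ Icc (0:ℝ) 1, σ t ∈ Icc (0:ℝ) 1 := fun t ht =>
    hσ.2.subset (mem_image_of_mem σ ht)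
  have hτmem : ∀ t ∈ Icc (0:ℝ) 1, τ t ∈ Icc (0:ℝ) 1 := fun t ht =>
    hτ.2.subset (mem_image_of_mem τ ht)
  have himg : (fun t => (σ t, τ t)) '' Icc (0:ℝ) 1 ⊆ freeSpace d P Q ε := by
    rintro _ ⟨t, ht, rfl⟩
    exact ⟨⟨hσmem t ht, hτmem t ht⟩, hle t ht⟩
  have hconn : IsPreconnected ((fun t => (σ t, τ t)) '' Icc (0:ℝ) 1) :=
    isPreconnected_Icc.image _ (hσ.1.prodMk hτ.1)
  have h0 : (0:ℝ) ∈ Icc (0:ℝ) 1 := ⟨le_refl 0, zero_le_one⟩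
  have hx : (σ 0, τ 0) ∈ (fun t => (σ t, τ t)) '' Icc (0:ℝ) 1 :=
    mem_image_of_mem _ h0
  have hsub := hconn.subset_connectedComponentIn hx himg
  have hCsub : connectedComponentIn (freeSpace d P Q ε) (σ 0, τ 0) ⊆ freeSpace d P Q ε :=
    connectedComponentIn_subset _ _
  refine ⟨(σ 0, τ 0), himg hx, hsub, ?_, ?_⟩
  · apply Subset.antisymm
    · rintro _ ⟨p, hp, rfl⟩
      exact (hCsub hp).1.1
    · intro s hs
      rw [← hσ.2] at hs
      obtain ⟨t, ht, rfl⟩ := hs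
      exact ⟨(σ t, τ t), hsub (mem_image_of_mem _ ht), rfl⟩
  · apply Subset.antisymm
    · rintro _ ⟨p, hp, rfl⟩
      exact (hCsub hp).1.2
    · intro s hs
      rw [← hτ.2] at hs
      obtain ⟨t, ht, rfl⟩ := hs
      exact ⟨(σ t, τ t), hsub (mem_image_of_mem _ ht), rfl⟩

/-- If `σ, τ` are continuous surjections of `[0,1]` with `‖P (σ t) - Q (τ t)‖ ≤ ε`
for all `t ∈ [0,1]`, then a single connected component of the free space
`F_ε(P,Q)` — namely the one containing the connected set `{(σ t, τ t) : t ∈ [0,1]}`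
— covers both parameter spaces. Consequently `δ_1F(P,Q) ≤ δ_wF(P,Q)`. -/
theorem exists_component_coversBoth_of_reparams
    (d : ℕ) (P Q : ℝ → EuclideanSpace ℝ (Fin d))
    (hP : ContinuousOn P (Icc 0 1)) (hQ : ContinuousOn Q (Icc 0 1))
    (ε : ℝ) (hε : 0 ≤ ε) (σ τ : ℝ → ℝ)
    (hσ : IsReparam σ) (hτ : IsReparam τ)
    (hle : ∀ t ∈ Icc (0:ℝ) 1, ‖P (σ t) - Q (τ t)‖ ≤ ε) :
    (∃ x ∈ freeSpace d P Q ε,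
      (fun t => (σ t, τ t)) '' Icc (0:ℝ) 1 ⊆ connectedComponentIn (freeSpace d P Q ε) x ∧
      CoversBoth (connectedComponentIn (freeSpace d P Q ε) x)) ∧
    kFrechetDist d 1 P Q ≤ weakFrechetDist d P Q := by
  refine ⟨key_component d P Q ε σ τ hσ hτ hle, ?_⟩
  apply csInf_le_csInf
  · exact ⟨0, fun r hr => hr.1⟩
  · exact ⟨_, σ, τ, hσ, hτ, rfl⟩
  · rintro r ⟨σ', τ', hσ', hτ', rfl⟩
    have hσ'mem : ∀ t : Icc (0:ℝ) 1, σ' ↑t ∈ Icc (0:ℝ) 1 := fun t => by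
      exact hσ'.2.subset (mem_image_of_mem σ' t.2)
    have hτ'mem : ∀ t : Icc (0:ℝ) 1, τ' ↑t ∈ Icc (0:ℝ) 1 := fun t => by
      exact hτ'.2.subset (mem_image_of_mem τ' t.2)
    have hPc : Continuous fun t : Icc (0:ℝ) 1 => P (σ' ↑t) :=
      hP.comp_continuous hσ'.1.restrict hσ'mem
    have hQc : Continuous fun t : Icc (0:ℝ) 1 => Q (τ' ↑t) :=
      hQ.comp_continuous hτ'.1.restrict hτ'mem
    have hcont : Continuous fun t : Icc (0:ℝ) 1 => ‖P (σ' ↑t) - Q (τ' ↑t)‖ :=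
      (hPc.sub hQc).norm
    have hb : BddAbove (range fun t : Icc (0:ℝ) 1 => ‖P (σ' ↑t) - Q (τ' ↑t)‖) :=
      (isCompact_range hcont).bddAbove
    set r : ℝ := ⨆ t : Icc (0:ℝ) 1, ‖P (σ' ↑t) - Q (τ' ↑t)‖ with hr
    have hle' : ∀ t ∈ Icc (0:ℝ) 1, ‖P (σ' t) - Q (τ' t)‖ ≤ r := fun t ht =>
      le_ciSup hb (⟨t, ht⟩ : Icc (0:ℝ) 1)
    obtain ⟨x, hxF, hsub', hcov⟩ := key_component d P Q r σ' τ' hσ' hτ' hle'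
    refine ⟨Real.iSup_nonneg fun t => norm_nonneg _,
      {connectedComponentIn (freeSpace d P Q r) x}, ?_, finite_singleton _, ?_, ?_⟩
    · rintro c hc
      rw [mem_singleton_iff] at hc
      exact ⟨x, hxF, hc⟩
    · simp
    · rwa [sUnion_singleton]
end
end

section
/- Let P, Q : [0,1] → ℝ^d be curves, let [a,b] ⊆ [0,1] and [c,d] ⊆ [0,1] be subintervals, and suppose P is affine on [a,b] and Q is affine on [c,d]. Then for every ε ≥ 0 the set {(s,t) ∈ [a,b]×[c,d] : ‖P(s) − Q(t)‖ ≤ ε} is convex. -/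
open Set Metric

noncomputable section

/-- `P` is affine on the interval `[a,b]`: it agrees there with an affine map
`s ↦ u + s • v`. -/
def IsAffineOn {d : ℕ} (P : ℝ → EuclideanSpace ℝ (Fin d)) (a b : ℝ) : Prop :=
  ∃ u v : EuclideanSpace ℝ (Fin d), ∀ s ∈ Icc a b, P s = u + s • v

/-- `P` is a polygonal curve with `n` segments: it is continuous on `[0,1]` and
there is a partition `0 = s_0 < s_1 < ⋯ < s_n = 1` such that `P` is affine on each
subinterval `[s_{i-1}, s_i]`. -/
def IsPolygonal (d n : ℕ) (P : ℝ → EuclideanSpace ℝ (Fin d)) : Prop :=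
  ContinuousOn P (Icc 0 1) ∧ ∃ s : Fin (n + 1) → ℝ,
    s 0 = 0 ∧ s (Fin.last n) = 1 ∧ StrictMono s ∧
    ∀ i : Fin n, IsAffineOn P (s i.castSucc) (s i.succ)

/-- If `P` is affine on `[a,b] ⊆ [0,1]` and `Q` is affine on `[c,e] ⊆ [0,1]`, then
for every `ε ≥ 0` the set `{(s,t) ∈ [a,b]×[c,e] : ‖P s - Q t‖ ≤ ε}` is convex. -/
theorem freeSpace_cell_convex
    (d : ℕ) (P Q : ℝ → EuclideanSpace ℝ (Fin d))
    (a b c e : ℝ) (hab : Icc a b ⊆ Icc (0:ℝ) 1) (hce : Icc c e ⊆ Icc (0:ℝ) 1)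
    (hP : IsAffineOn P a b) (hQ : IsAffineOn Q c e)
    (ε : ℝ) (hε : 0 ≤ ε) :
    Convex ℝ {p : ℝ × ℝ | p ∈ Icc a b ×ˢ Icc c e ∧ ‖P p.1 - Q p.2‖ ≤ ε} := by
  obtain ⟨u, v, hu⟩ := hP
  obtain ⟨w, z, hw⟩ := hQ
  rintro ⟨x1, x2⟩ ⟨hx, hxε⟩ ⟨y1, y2⟩ ⟨hy, hyε⟩ α β hα hβ hαβ
  have hmem : α • (x1, x2) + β • (y1, y2) ∈ Icc a b ×ˢ Icc c e :=
    ((convex_Icc a b).prod (convex_Icc c e)) hx hy hα hβ hαβ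
  refine ⟨hmem, ?_⟩
  obtain ⟨hm1, hm2⟩ := hmem
  simp only [Prod.smul_mk, Prod.mk_add_mk, smul_eq_mul] at hm1 hm2 ⊢
  rw [hu _ hm1, hw _ hm2, hu _ hx.1, hw _ hx.2] at *
  rw [hu _ hy.1, hw _ hy.2] at hyε
  have key : u + (α * x1 + β * y1) • v - (w + (α * x2 + β * y2) • z)
      = α • (u + x1 • v - (w + x2 • z)) + β • (u + y1 • v - (w + y2 • z)) := by
    have h1 : α + β = 1 := hαβ
    match_scalars <;> nlinarith [h1]
  rw [key]
  calc ‖α • (u + x1 • v - (w + x2 • z)) + β • (u + y1 • v - (w + y2 • z))‖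
      ≤ ‖α • (u + x1 • v - (w + x2 • z))‖ + ‖β • (u + y1 • v - (w + y2 • z))‖ :=
        norm_add_le _ _
    _ = α * ‖u + x1 • v - (w + x2 • z)‖ + β * ‖u + y1 • v - (w + y2 • z)‖ := by
        rw [norm_smul, norm_smul, Real.norm_of_nonneg hα, Real.norm_of_nonneg hβ]
    _ ≤ α * ε + β * ε := by
        gcongr
    _ = ε := by rw [← add_mul, hαβ, one_mul]
end
end

section
/- Let P : [0,1] → ℝ^d be a polygonal curve with n segments and Q : [0,1] → ℝ^d a polygonal curve with m segments, and let ε ≥ 0. Then the free space F_ε(P,Q) has at most n·m connected components. -/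
open Set Metric

noncomputable section

lemma partition_cover {n : ℕ} (s : Fin (n + 1) → ℝ) (h0 : s 0 = 0)
    (h1 : s (Fin.last n) = 1) (hm : StrictMono s) {x : ℝ} (hx : x ∈ Icc (0:ℝ) 1) :
    ∃ i : Fin n, x ∈ Icc (s i.castSucc) (s i.succ) := by
  cases n with
  | zero =>
      exfalso
      have : (0:ℝ) = 1 := by rw [← h0, ← h1]; rfl
      linarith
  | succ n =>
      classical
      set T : Finset (Fin (n + 2)) := Finset.univ.filter (fun i => s i ≤ x) with hT
      have h0T : (0 : Fin (n + 2)) ∈ T := by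
        simp [hT, h0, hx.1]
      set i := T.max' ⟨0, h0T⟩ with hi
      have hiT : i ∈ T := T.max'_mem _
      have hsi : s i ≤ x := by simpa [hT] using hiT
      by_cases hlt : (i : ℕ) < n + 1
      · refine ⟨⟨i, hlt⟩, ?_, ?_⟩
        · have : (⟨i, hlt⟩ : Fin (n+1)).castSucc = i := by
            ext; simp
          rw [this]; exact hsi
        · by_contra hcon
          push_neg at hcon
          have hmem : (⟨i, hlt⟩ : Fin (n+1)).succ ∈ T := by
            rw [hT, Finset.mem_filter]
            exact ⟨Finset.mem_univ _, le_of_lt hcon⟩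
          have := T.le_max' _ hmem
          rw [← hi] at this
          have hlt2 : i < (⟨i, hlt⟩ : Fin (n+1)).succ := by
            rw [Fin.lt_def]; simp
          exact absurd this (not_le.mpr hlt2)
      · have hieq : i = Fin.last (n + 1) := by
          apply Fin.ext
          have := i.isLt
          simp only [Fin.val_last]
          omega
        have hx1 : x = 1 := le_antisymm hx.2 (by rw [← h1, ← hieq]; exact hsi)
        refine ⟨Fin.last n, ?_, ?_⟩
        · have : (Fin.last n).castSucc ≤ Fin.last (n + 1) := Fin.le_last _
          calc s (Fin.last n).castSucc ≤ s (Fin.last (n+1)) := hm.monotone this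
            _ = 1 := h1
            _ = x := hx1.symm
        · have : (Fin.last n).succ = Fin.last (n + 1) := by
            ext; simp
          rw [this, h1, hx1]

/-- If `P` is a polygonal curve with `n` segments and `Q` a polygonal curve with
`m` segments, then for every `ε ≥ 0` the free space `F_ε(P,Q)` has at most `n·m`
connected components. -/
theorem freeSpace_components_le
    (d n m : ℕ) (P Q : ℝ → EuclideanSpace ℝ (Fin d))
    (hP : IsPolygonal d n P) (hQ : IsPolygonal d m Q)
    (ε : ℝ) (hε : 0 ≤ ε) :
    {c : Set (ℝ × ℝ) | IsComponentOf (freeSpace d P Q ε) c}.Finite ∧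
    {c : Set (ℝ × ℝ) | IsComponentOf (freeSpace d P Q ε) c}.ncard ≤ n * m := by
  classical
  obtain ⟨hPc, s, hs0, hs1, hsm, hPa⟩ := hP
  obtain ⟨hQc, t, ht0, ht1, htm, hQa⟩ := hQ
  set F := freeSpace d P Q ε with hFdef
  have hs01 : ∀ i : Fin (n + 1), s i ∈ Icc (0:ℝ) 1 := fun i =>
    ⟨hs0 ▸ hsm.monotone (Fin.zero_le i), hs1 ▸ hsm.monotone (Fin.le_last i)⟩
  have ht01 : ∀ j : Fin (m + 1), t j ∈ Icc (0:ℝ) 1 := fun j =>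
    ⟨ht0 ▸ htm.monotone (Fin.zero_le j), ht1 ▸ htm.monotone (Fin.le_last j)⟩
  set K : Fin n → Fin m → Set (ℝ × ℝ) := fun i j =>
    (Icc (s i.castSucc) (s i.succ) ×ˢ Icc (t j.castSucc) (t j.succ)) ∩ F with hKdef
  have hKF : ∀ i j, K i j ⊆ F := fun i j => inter_subset_right
  have hrect : ∀ (i : Fin n) (j : Fin m),
      (Icc (s i.castSucc) (s i.succ) ×ˢ Icc (t j.castSucc) (t j.succ)) ⊆
        Icc (0:ℝ) 1 ×ˢ Icc (0:ℝ) 1 := by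
    intro i j
    apply prod_mono
    · exact Icc_subset_Icc (hs01 _).1 (hs01 _).2
    · exact Icc_subset_Icc (ht01 _).1 (ht01 _).2
  have hKconv : ∀ i j, Convex ℝ (K i j) := by
    intro i j
    obtain ⟨u, v, hu⟩ := hPa i
    obtain ⟨w, z, hw⟩ := hQa j
    rintro p ⟨hpr, hpF⟩ q ⟨hqr, hqF⟩ a b ha hb hab
    have hrc : a • p + b • q ∈
        Icc (s i.castSucc) (s i.succ) ×ˢ Icc (t j.castSucc) (t j.succ) :=
      ((convex_Icc _ _).prod (convex_Icc _ _)) hpr hqr ha hb hab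
    refine ⟨hrc, hrect i j hrc, ?_⟩
    have hc1 : (a • p + b • q).1 = a * p.1 + b * q.1 := rfl
    have hc2 : (a • p + b • q).2 = a * p.2 + b * q.2 := rfl
    have e : P (a • p + b • q).1 - Q (a • p + b • q).2 =
        a • (P p.1 - Q p.2) + b • (P q.1 - Q q.2) := by
      rw [hu _ hrc.1, hw _ hrc.2, hu _ hpr.1, hw _ hpr.2, hu _ hqr.1, hw _ hqr.2,
        hc1, hc2]
      have hb' : b = 1 - a := by linarith
      subst hb'
      module
    rw [e]
    calc ‖a • (P p.1 - Q p.2) + b • (P q.1 - Q q.2)‖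
        ≤ ‖a • (P p.1 - Q p.2)‖ + ‖b • (P q.1 - Q q.2)‖ := norm_add_le _ _
      _ = a * ‖P p.1 - Q p.2‖ + b * ‖P q.1 - Q q.2‖ := by
          rw [norm_smul, norm_smul, Real.norm_of_nonneg ha, Real.norm_of_nonneg hb]
      _ ≤ a * ε + b * ε :=
          add_le_add (mul_le_mul_of_nonneg_left hpF.2 ha)
            (mul_le_mul_of_nonneg_left hqF.2 hb)
      _ = ε := by rw [← add_mul, hab, one_mul]
  have hcover : ∀ x ∈ F, ∃ i j, x ∈ K i j := by
    intro x hx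
    obtain ⟨i, hi⟩ := partition_cover s hs0 hs1 hsm hx.1.1
    obtain ⟨j, hj⟩ := partition_cover t ht0 ht1 htm hx.1.2
    exact ⟨i, j, ⟨hi, hj⟩, hx⟩
  set g : Fin n × Fin m → Set (ℝ × ℝ) := fun ij =>
    if h : (K ij.1 ij.2).Nonempty then connectedComponentIn F h.choose else ∅
    with hgdef
  have hsub : {c : Set (ℝ × ℝ) | IsComponentOf F c} ⊆ Set.range g := by
    rintro c ⟨x, hxF, rfl⟩
    obtain ⟨i, j, hxK⟩ := hcover x hxF
    have hne : (K i j).Nonempty := ⟨x, hxK⟩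
    refine ⟨(i, j), ?_⟩
    simp only [hgdef, dif_pos hne]
    have hy := hne.choose_spec
    have hpre : IsPreconnected (K i j) := (hKconv i j).isPreconnected
    have hsub2 := hpre.subset_connectedComponentIn hy (hKF i j)
    exact connectedComponentIn_eq (hsub2 hxK)
  have hfin : (Set.range g).Finite := Set.finite_range g
  refine ⟨hfin.subset hsub, ?_⟩
  calc {c : Set (ℝ × ℝ) | IsComponentOf F c}.ncard
      ≤ (Set.range g).ncard := Set.ncard_le_ncard hsub hfin
    _ ≤ Nat.card (Fin n × Fin m) := by
        rw [← Set.image_univ]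
        calc (g '' Set.univ).ncard ≤ (Set.univ : Set (Fin n × Fin m)).ncard :=
              Set.ncard_image_le Set.finite_univ
          _ = Nat.card (Fin n × Fin m) := Set.ncard_univ _
    _ = n * m := by simp [Nat.card_eq_fintype_card]
end
end

section
/- For polygonal curves P, Q : [0,1] → ℝ^d, the 1-Fréchet distance equals the weak Fréchet distance: δ_1F(P,Q) = δ_wF(P,Q). Equivalently, for every ε ≥ 0, there exists a single connected component of F_ε(P,Q) covering both parameter spaces if and only if δ_wF(P,Q) ≤ ε. -/
open Set Metric

noncomputable section

-- chain reachability
def Reach (s : Set (ℝ × ℝ)) (δ : ℝ) (x y : ℝ × ℝ) : Prop :=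
  ∃ (N : ℕ) (g : ℕ → ℝ × ℝ), g 0 = x ∧ g N = y ∧ (∀ i, g i ∈ s) ∧
    ∀ i < N, dist (g i) (g (i + 1)) < δ

namespace Reach

variable {s : Set (ℝ × ℝ)} {δ : ℝ} {x y z : ℝ × ℝ}

lemma refl (hx : x ∈ s) : Reach s δ x x :=
  ⟨0, fun _ => x, rfl, rfl, fun _ => hx, fun i h => absurd h (Nat.not_lt_zero i)⟩

lemma trans (h1 : Reach s δ x y) (h2 : Reach s δ y z) : Reach s δ x z := by
  obtain ⟨N₁, g₁, hg10, hg1N, hg1mem, hg1step⟩ := h1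
  obtain ⟨N₂, g₂, hg20, hg2N, hg2mem, hg2step⟩ := h2
  refine ⟨N₁ + N₂, fun i => if i ≤ N₁ then g₁ i else g₂ (i - N₁), ?_, ?_, ?_, ?_⟩
  · simpa using hg10
  · by_cases h : N₁ + N₂ ≤ N₁
    · have hN2 : N₂ = 0 := by omega
      simp only [if_pos h]
      rw [show N₁ + N₂ = N₁ by omega, hg1N, ← hg2N, hN2, hg20]
    · simp only [if_neg h]
      rw [show N₁ + N₂ - N₁ = N₂ by omega, hg2N]
  · intro i
    dsimp only
    split_ifs
    · exact hg1mem i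
    · exact hg2mem _
  · intro i hi
    dsimp only
    by_cases h1 : i + 1 ≤ N₁
    · rw [if_pos (show i ≤ N₁ by omega), if_pos h1]
      exact hg1step i (by omega)
    · by_cases h2 : i ≤ N₁
      · have hiN : i = N₁ := by omega
        subst hiN
        rw [if_pos le_rfl, if_neg h1, show i + 1 - i = 1 by omega, hg1N, ← hg20]
        exact hg2step 0 (by omega)
      · rw [if_neg h2, if_neg (show ¬ i + 1 ≤ N₁ by omega), show i + 1 - N₁ = (i - N₁) + 1 by omega]
        exact hg2step (i - N₁) (by omega)

lemma pair (hx : x ∈ s) (hy : y ∈ s) (h : dist x y < δ) : Reach s δ x y := by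
  refine ⟨1, fun i => if i = 0 then x else y, by simp, by simp, ?_, ?_⟩
  · intro i; dsimp only; split_ifs <;> assumption
  · intro i hi
    have : i = 0 := by omega
    subst this
    simpa using h

end Reach

lemma reach_of_preconnected {s : Set (ℝ × ℝ)} (hs : IsPreconnected s) {x y : ℝ × ℝ}
    (hx : x ∈ s) (hy : y ∈ s) {δ : ℝ} (hδ : 0 < δ) : Reach s δ x y := by
  by_contra hxy
  set u := ⋃ z ∈ {z ∈ s | Reach s δ x z}, ball z δ with hu_def
  set v := ⋃ z ∈ {z ∈ s | ¬ Reach s δ x z}, ball z δ with hv_def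
  have hu : IsOpen u := isOpen_biUnion fun _ _ => isOpen_ball
  have hv : IsOpen v := isOpen_biUnion fun _ _ => isOpen_ball
  have hsub : s ⊆ u ∪ v := by
    intro z hz
    by_cases h : Reach s δ x z
    · exact Or.inl (mem_biUnion (⟨hz, h⟩ : z ∈ {z ∈ s | Reach s δ x z}) (mem_ball_self hδ))
    · exact Or.inr (mem_biUnion (⟨hz, h⟩ : z ∈ {z ∈ s | ¬ Reach s δ x z}) (mem_ball_self hδ))
  have h1 : (s ∩ u).Nonempty :=
    ⟨x, hx, mem_biUnion (⟨hx, Reach.refl hx⟩ : x ∈ {z ∈ s | Reach s δ x z}) (mem_ball_self hδ)⟩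
  have h2 : (s ∩ v).Nonempty :=
    ⟨y, hy, mem_biUnion (⟨hy, hxy⟩ : y ∈ {z ∈ s | ¬ Reach s δ x z}) (mem_ball_self hδ)⟩
  obtain ⟨z, hzs, hzu, hzv⟩ := hs u v hu hv hsub h1 h2
  obtain ⟨w, hw, hzw⟩ := mem_iUnion₂.1 hzu
  obtain ⟨w', hw', hzw'⟩ := mem_iUnion₂.1 hzv
  have r1 : Reach s δ x z :=
    hw.2.trans (Reach.pair hw.1 hzs (by rw [dist_comm]; exact mem_ball.1 hzw))
  have r2 : Reach s δ x w' :=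
    r1.trans (Reach.pair hzs hw'.1 (mem_ball.1 hzw'))
  exact hw'.2 r2

-- the unit square and distance function
abbrev Sq : Set (ℝ × ℝ) := Icc (0:ℝ) 1 ×ˢ Icc (0:ℝ) 1

lemma isCompact_Sq : IsCompact Sq := isCompact_Icc.prod isCompact_Icc

lemma convex_Sq : Convex ℝ Sq := (convex_Icc _ _).prod (convex_Icc _ _)

-- segments
def segSet (a b : ℝ × ℝ) : Set (ℝ × ℝ) := (fun t : ℝ => a + t • (b - a)) '' Icc 0 1

lemma isPreconnected_segSet (a b : ℝ × ℝ) : IsPreconnected (segSet a b) :=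
  isPreconnected_Icc.image _ (Continuous.continuousOn (by continuity))

lemma left_mem_segSet (a b : ℝ × ℝ) : a ∈ segSet a b :=
  ⟨0, ⟨le_rfl, zero_le_one⟩, by simp⟩

lemma right_mem_segSet (a b : ℝ × ℝ) : b ∈ segSet a b :=
  ⟨1, ⟨zero_le_one, le_rfl⟩, by simp⟩

lemma segSet_subset_convex {K : Set (ℝ × ℝ)} (hK : Convex ℝ K) {a b : ℝ × ℝ}
    (ha : a ∈ K) (hb : b ∈ K) : segSet a b ⊆ K := by
  rintro _ ⟨t, ⟨ht0, ht1⟩, rfl⟩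
  have h := hK ha hb (by linarith : (0:ℝ) ≤ 1 - t) ht0 (by ring)
  show a + t • (b - a) ∈ K
  have heq : a + t • (b - a) = (1 - t) • a + t • b := by
    rw [smul_sub, sub_smul, one_smul]; abel
  rw [heq]; exact h

lemma dist_le_of_mem_segSet {a b z : ℝ × ℝ} (hz : z ∈ segSet a b) : dist z a ≤ dist a b := by
  obtain ⟨t, ⟨ht0, ht1⟩, rfl⟩ := hz
  rw [dist_eq_norm, add_sub_cancel_left, norm_smul, Real.norm_eq_abs, abs_of_nonneg ht0,
    dist_eq_norm, ← norm_neg (a - b)]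
  simp only [neg_sub]
  calc t * ‖b - a‖ ≤ 1 * ‖b - a‖ := by
        exact mul_le_mul_of_nonneg_right ht1 (norm_nonneg _)
    _ = ‖b - a‖ := one_mul _

-- straight-line path
def seg (a b : ℝ × ℝ) : Path a b where
  toFun := fun t => a + (t : ℝ) • (b - a)
  continuous_toFun := by continuity
  source' := by simp
  target' := by simp

lemma seg_range_subset (a b : ℝ × ℝ) : range (seg a b) ⊆ segSet a b := by
  rintro _ ⟨t, rfl⟩
  exact ⟨t, t.2, rfl⟩

-- path through a chain of points
noncomputable def pathThrough (g : ℕ → ℝ × ℝ) : (N : ℕ) → Path (g 0) (g N) :=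
  Nat.rec (Path.refl (g 0)) (fun N p => p.trans (seg (g N) (g (N + 1))))

lemma pathThrough_zero (g : ℕ → ℝ × ℝ) : pathThrough g 0 = Path.refl (g 0) := rfl

lemma pathThrough_succ (g : ℕ → ℝ × ℝ) (N : ℕ) :
    pathThrough g (N + 1) = (pathThrough g N).trans (seg (g N) (g (N + 1))) := rfl

lemma mem_range_pathThrough (g : ℕ → ℝ × ℝ) (N : ℕ) {i : ℕ} (hi : i ≤ N) :
    g i ∈ range (pathThrough g N) := by
  induction N with
  | zero =>
    have : i = 0 := by omega
    subst this
    exact ⟨0, (pathThrough g 0).source⟩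
  | succ N ih =>
    rw [pathThrough_succ, Path.trans_range]
    rcases Nat.lt_or_ge i (N + 1) with h | h
    · exact Or.inl (ih (by omega))
    · have : i = N + 1 := by omega
      subst this
      exact Or.inr ⟨1, (seg (g N) (g (N + 1))).target⟩

lemma range_pathThrough_subset (g : ℕ → ℝ × ℝ) (N : ℕ) :
    range (pathThrough g N) ⊆ {g 0} ∪ ⋃ i ∈ Finset.range N, segSet (g i) (g (i + 1)) := by
  induction N with
  | zero => rw [pathThrough_zero, Path.refl_range]; exact subset_union_left
  | succ N ih =>
    rw [pathThrough_succ, Path.trans_range]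
    apply union_subset
    · refine ih.trans (union_subset_union_right _ ?_)
      intro z hz
      simp only [mem_iUnion, Finset.mem_range] at hz ⊢
      obtain ⟨i, hi, hzi⟩ := hz
      exact ⟨i, by omega, hzi⟩
    · refine (seg_range_subset _ _).trans ?_
      intro z hz
      refine Or.inr ?_
      simp only [mem_iUnion, Finset.mem_range]
      exact ⟨N, by omega, hz⟩

lemma range_pathThrough_subset_convex {K : Set (ℝ × ℝ)} (hK : Convex ℝ K)
    {g : ℕ → ℝ × ℝ} (hg : ∀ i, g i ∈ K) (N : ℕ) :
    range (pathThrough g N) ⊆ K := by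
  refine (range_pathThrough_subset g N).trans ?_
  apply union_subset
  · simp [hg 0]
  · refine iUnion₂_subset fun i _ => segSet_subset_convex hK (hg i) (hg (i + 1))

lemma range_pathThrough_close {g : ℕ → ℝ × ℝ} {N : ℕ} {δ : ℝ} (hδ : 0 < δ)
    (hstep : ∀ i < N, dist (g i) (g (i + 1)) < δ) :
    ∀ z ∈ range (pathThrough g N), ∃ i, dist z (g i) < δ := by
  intro z hz
  rcases range_pathThrough_subset g N hz with h | h
  · exact ⟨0, by simp only [mem_singleton_iff] at h; simp [h, hδ]⟩
  · simp only [mem_iUnion, Finset.mem_range] at h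
    obtain ⟨i, hi, hzi⟩ := h
    exact ⟨i, lt_of_le_of_lt (dist_le_of_mem_segSet hzi) (hstep i hi)⟩

section FreeSpaceFacts

variable {d : ℕ} {P Q : ℝ → EuclideanSpace ℝ (Fin d)}

def fdist (P Q : ℝ → EuclideanSpace ℝ (Fin d)) : ℝ × ℝ → ℝ := fun p => ‖P p.1 - Q p.2‖

lemma mem_freeSpace_iff {ε : ℝ} {p : ℝ × ℝ} :
    p ∈ freeSpace d P Q ε ↔ p ∈ Sq ∧ fdist P Q p ≤ ε := Iff.rfl

lemma freeSpace_subset_Sq (ε : ℝ) : freeSpace d P Q ε ⊆ Sq := fun _ hp => hp.1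

lemma freeSpace_mono {ε ε' : ℝ} (h : ε ≤ ε') : freeSpace d P Q ε ⊆ freeSpace d P Q ε' :=
  fun _ hp => ⟨hp.1, hp.2.trans h⟩

lemma fdist_continuousOn (hP : ContinuousOn P (Icc 0 1)) (hQ : ContinuousOn Q (Icc 0 1)) :
    ContinuousOn (fdist P Q) Sq := by
  apply ContinuousOn.norm
  exact ContinuousOn.sub
    (hP.comp continuousOn_fst (fun p hp => hp.1))
    (hQ.comp continuousOn_snd (fun p hp => hp.2))

lemma isCompact_freeSpace (hP : ContinuousOn P (Icc 0 1)) (hQ : ContinuousOn Q (Icc 0 1))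
    (ε : ℝ) : IsCompact (freeSpace d P Q ε) := by
  have h1 : freeSpace d P Q ε = Sq ∩ (fdist P Q) ⁻¹' Iic ε := by
    ext p; exact Iff.rfl
  have h2 : IsClosed (Sq ∩ (fdist P Q) ⁻¹' Iic ε) :=
    (fdist_continuousOn hP hQ).preimage_isClosed_of_isClosed
      (isClosed_Icc.prod isClosed_Icc) isClosed_Iic
  rw [h1]
  exact isCompact_Sq.of_isClosed_subset h2 inter_subset_left

lemma isCompact_connectedComponentIn {F : Set (ℝ × ℝ)} (hF : IsCompact F) {x : ℝ × ℝ}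
    (hx : x ∈ F) : IsCompact (connectedComponentIn F x) := by
  rw [connectedComponentIn_eq_image hx]
  haveI : CompactSpace F := isCompact_iff_compactSpace.1 hF
  exact isClosed_connectedComponent.isCompact.image continuous_subtype_val

end FreeSpaceFacts

-- intersection of a nested sequence of compact connected sets is connected
lemma isPreconnected_iInter_of_nested {D : ℕ → Set (ℝ × ℝ)}
    (hsub : ∀ n, D (n + 1) ⊆ D n) (hcomp : ∀ n, IsCompact (D n))
    (hconn : ∀ n, IsPreconnected (D n)) : IsPreconnected (⋂ n, D n) := by
  have hC : IsClosed (⋂ n, D n) := isClosed_iInter fun n => (hcomp n).isClosed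
  rw [isPreconnected_iff_subset_of_fully_disjoint_closed hC]
  intro u v hu hv hcover hdisj
  obtain ⟨U, V, hU, hV, huU, hvV, hUV⟩ := normal_separation hu hv hdisj
  have hUVeq : U ∩ V = ∅ := hUV.inter_eq
  have hexn : ∃ n, D n ⊆ U ∪ V := by
    by_contra h
    push_neg at h
    have hne : ∀ n, (D n ∩ (U ∪ V)ᶜ).Nonempty := by
      intro n
      obtain ⟨p, hp, hp2⟩ := not_subset.1 (h n)
      exact ⟨p, hp, hp2⟩
    obtain ⟨p, hp⟩ := IsCompact.nonempty_iInter_of_sequence_nonempty_isCompact_isClosed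
      (fun n => D n ∩ (U ∪ V)ᶜ)
      (fun n => inter_subset_inter_left _ (hsub n)) hne
      ((hcomp 0).inter_right (hU.union hV).isClosed_compl)
      (fun n => (hcomp n).isClosed.inter (hU.union hV).isClosed_compl)
    simp only [mem_iInter, mem_inter_iff] at hp
    have hpC : p ∈ ⋂ n, D n := mem_iInter.2 fun n => (hp n).1
    have : p ∈ U ∪ V := by
      rcases hcover hpC with h' | h'
      · exact Or.inl (huU h')
      · exact Or.inr (hvV h')
    exact (hp 0).2 this
  obtain ⟨n, hn⟩ := hexn
  have hUorV : D n ⊆ U ∨ D n ⊆ V := by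
    by_contra hcon
    push_neg at hcon
    have hne1 : (D n ∩ U).Nonempty := by
      rcases (D n ∩ U).eq_empty_or_nonempty with h | h
      · exact absurd (fun p hp => (hn hp).resolve_left
          (fun hu' => (eq_empty_iff_forall_notMem.1 h p) ⟨hp, hu'⟩)) hcon.2
      · exact h
    have hne2 : (D n ∩ V).Nonempty := by
      rcases (D n ∩ V).eq_empty_or_nonempty with h | h
      · exact absurd (fun p hp => (hn hp).resolve_right
          (fun hv' => (eq_empty_iff_forall_notMem.1 h p) ⟨hp, hv'⟩)) hcon.1
      · exact h
    obtain ⟨z, hz⟩ := hconn n U V hU hV hn hne1 hne2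
    rw [hUVeq] at hz
    exact hz.2
  have hCn : (⋂ m, D m) ⊆ D n := iInter_subset _ n
  rcases hUorV with h | h
  · left
    intro p hp
    rcases hcover hp with h' | h'
    · exact h'
    · exfalso
      have : p ∈ U ∩ V := ⟨h (hCn hp), hvV h'⟩
      rw [hUVeq] at this; exact this
  · right
    intro p hp
    rcases hcover hp with h' | h'
    · exfalso
      have : p ∈ U ∩ V := ⟨huU h', h (hCn hp)⟩
      rw [hUVeq] at this; exact this
    · exact h'

section WeakFacts

variable {d : ℕ} (P Q : ℝ → EuclideanSpace ℝ (Fin d))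

def WSet : Set ℝ :=
  {r : ℝ | ∃ σ τ : ℝ → ℝ, IsReparam σ ∧ IsReparam τ ∧
    r = ⨆ t : Icc (0:ℝ) 1, ‖P (σ ↑t) - Q (τ ↑t)‖}

lemma weakFrechetDist_eq : weakFrechetDist d P Q = sInf (WSet P Q) := rfl

lemma isReparam_id : IsReparam (id : ℝ → ℝ) := ⟨continuousOn_id, image_id _⟩

lemma wset_nonempty : (WSet P Q).Nonempty :=
  ⟨_, id, id, isReparam_id, isReparam_id, rfl⟩

lemma wset_nonneg : ∀ r ∈ WSet P Q, 0 ≤ r := by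
  rintro r ⟨σ, τ, _, _, rfl⟩
  exact Real.iSup_nonneg fun t => norm_nonneg _

lemma wset_bddBelow : BddBelow (WSet P Q) := ⟨0, wset_nonneg P Q⟩

lemma weakFrechetDist_nonneg : 0 ≤ weakFrechetDist d P Q :=
  Real.sInf_nonneg (wset_nonneg P Q)

end WeakFacts

-- building a reparametrization from a path in the square
lemma isReparam_of_path {a b : ℝ × ℝ} (γ : Path a b) (π : ℝ × ℝ → ℝ)
    (hπ : Continuous π) (hπSq : ∀ z ∈ Sq, π z ∈ Icc (0:ℝ) 1)
    (hsq : range γ ⊆ Sq)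
    (h0 : ∃ u ∈ range γ, π u = 0) (h1 : ∃ u ∈ range γ, π u = 1) :
    IsReparam (fun t => π (γ.extend t)) := by
  constructor
  · exact (hπ.comp γ.continuous_extend).continuousOn
  · have himg : (fun t => π (γ.extend t)) '' Icc 0 1 = π '' range γ := by
      have h2 : γ.extend '' Icc 0 1 = range γ := by
        apply subset_antisymm
        · rintro _ ⟨t, ht, rfl⟩
          rw [γ.extend_apply ht]
          exact mem_range_self _
        · rintro _ ⟨t, rfl⟩
          exact ⟨↑t, t.2, γ.extend_extends' t⟩
      rw [← h2, image_image]
    rw [himg]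
    apply subset_antisymm
    · rintro _ ⟨u, hu, rfl⟩
      exact hπSq u (hsq hu)
    · have hpre : IsPreconnected (π '' range γ) :=
        (isPreconnected_range γ.continuous).image π hπ.continuousOn
      obtain ⟨u0, hu0, hu0'⟩ := h0
      obtain ⟨u1, hu1, hu1'⟩ := h1
      exact hpre.Icc_subset (hu0' ▸ mem_image_of_mem π hu0) (hu1' ▸ mem_image_of_mem π hu1)

-- Direction (a): a single connected component covering both gives weak Fréchet ≤ ε
lemma weak_le_of_component {d : ℕ} {P Q : ℝ → EuclideanSpace ℝ (Fin d)}
    (hP : ContinuousOn P (Icc 0 1)) (hQ : ContinuousOn Q (Icc 0 1))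
    {ε : ℝ} {c : Set (ℝ × ℝ)} (hc : IsComponentOf (freeSpace d P Q ε) c)
    (hcov : CoversBoth c) : weakFrechetDist d P Q ≤ ε := by
  obtain ⟨x₀, hx₀, rfl⟩ := hc
  set F := freeSpace d P Q ε with hF
  have hcpre : IsPreconnected (connectedComponentIn F x₀) := isPreconnected_connectedComponentIn
  have hcF : connectedComponentIn F x₀ ⊆ F := connectedComponentIn_subset F x₀
  set c := connectedComponentIn F x₀ with hc_def
  -- extreme points
  have h0f : (0:ℝ) ∈ Prod.fst '' c := by rw [hcov.1]; exact ⟨le_rfl, zero_le_one⟩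
  have h1f : (1:ℝ) ∈ Prod.fst '' c := by rw [hcov.1]; exact ⟨zero_le_one, le_rfl⟩
  have h0s : (0:ℝ) ∈ Prod.snd '' c := by rw [hcov.2]; exact ⟨le_rfl, zero_le_one⟩
  have h1s : (1:ℝ) ∈ Prod.snd '' c := by rw [hcov.2]; exact ⟨zero_le_one, le_rfl⟩
  obtain ⟨a, ha, ha1⟩ := h0f
  obtain ⟨b, hb, hb1⟩ := h1f
  obtain ⟨p, hp, hp2⟩ := h0s
  obtain ⟨q, hq, hq2⟩ := h1s
  -- reduce to ε + η
  have key : ∀ η : ℝ, 0 < η → weakFrechetDist d P Q ≤ ε + η := by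
    intro η hη
    -- uniform continuity
    obtain ⟨δ, hδpos, hδ⟩ : ∃ δ > 0, ∀ z ∈ Sq, ∀ w ∈ Sq, dist z w < δ →
        dist (fdist P Q z) (fdist P Q w) < η := by
      have huc := isCompact_Sq.uniformContinuousOn_of_continuous (fdist_continuousOn hP hQ)
      rw [Metric.uniformContinuousOn_iff] at huc
      obtain ⟨δ, hδ1, hδ2⟩ := huc η hη
      exact ⟨δ, hδ1, fun z hz w hw hzw => hδ2 z hz w hw hzw⟩
    -- chains
    obtain ⟨N₁, g₁, hg₁0, hg₁N, hg₁mem, hg₁step⟩ := reach_of_preconnected hcpre ha hp hδpos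
    obtain ⟨N₂, g₂, hg₂0, hg₂N, hg₂mem, hg₂step⟩ := reach_of_preconnected hcpre hp hb hδpos
    obtain ⟨N₃, g₃, hg₃0, hg₃N, hg₃mem, hg₃step⟩ := reach_of_preconnected hcpre hb hq hδpos
    -- paths
    set Γ₁ := (pathThrough g₁ N₁).cast hg₁0.symm hg₁N.symm with hΓ₁
    set Γ₂ := (pathThrough g₂ N₂).cast hg₂0.symm hg₂N.symm with hΓ₂
    set Γ₃ := (pathThrough g₃ N₃).cast hg₃0.symm hg₃N.symm with hΓ₃
    set γ := (Γ₁.trans Γ₂).trans Γ₃ with hγ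
    have e1 : range ⇑Γ₁ = range ⇑(pathThrough g₁ N₁) := by rw [hΓ₁, Path.cast_coe]
    have e2 : range ⇑Γ₂ = range ⇑(pathThrough g₂ N₂) := by rw [hΓ₂, Path.cast_coe]
    have e3 : range ⇑Γ₃ = range ⇑(pathThrough g₃ N₃) := by rw [hΓ₃, Path.cast_coe]
    have hrange : range ⇑γ = range ⇑(pathThrough g₁ N₁) ∪ range ⇑(pathThrough g₂ N₂)
        ∪ range ⇑(pathThrough g₃ N₃) := by
      rw [hγ, Path.trans_range, Path.trans_range, e1, e2, e3]
    have hcSq : c ⊆ Sq := hcF.trans (freeSpace_subset_Sq ε)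
    have hrangeSq : range ⇑γ ⊆ Sq := by
      rw [hrange]
      refine union_subset (union_subset ?_ ?_) ?_
      · exact range_pathThrough_subset_convex convex_Sq (fun i => hcSq (hg₁mem i)) _
      · exact range_pathThrough_subset_convex convex_Sq (fun i => hcSq (hg₂mem i)) _
      · exact range_pathThrough_subset_convex convex_Sq (fun i => hcSq (hg₃mem i)) _
    have hclose : ∀ z ∈ range ⇑γ, ∃ y ∈ c, dist z y < δ := by
      intro z hz
      rw [hrange] at hz
      rcases hz with (hz | hz) | hz
      · obtain ⟨i, hi⟩ := range_pathThrough_close hδpos hg₁step z hz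
        exact ⟨g₁ i, hg₁mem i, hi⟩
      · obtain ⟨i, hi⟩ := range_pathThrough_close hδpos hg₂step z hz
        exact ⟨g₂ i, hg₂mem i, hi⟩
      · obtain ⟨i, hi⟩ := range_pathThrough_close hδpos hg₃step z hz
        exact ⟨g₃ i, hg₃mem i, hi⟩
    have hamem : a ∈ range ⇑γ := by
      obtain ⟨t, ht⟩ := mem_range_pathThrough g₁ N₁ (Nat.zero_le N₁)
      rw [hrange]; exact Or.inl (Or.inl ⟨t, by rw [ht, hg₁0]⟩)
    have hbmem : b ∈ range ⇑γ := by
      obtain ⟨t, ht⟩ := mem_range_pathThrough g₂ N₂ le_rfl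
      rw [hrange]; exact Or.inl (Or.inr ⟨t, by rw [ht, hg₂N]⟩)
    have hpmem : p ∈ range ⇑γ := by
      obtain ⟨t, ht⟩ := mem_range_pathThrough g₁ N₁ le_rfl
      rw [hrange]; exact Or.inl (Or.inl ⟨t, by rw [ht, hg₁N]⟩)
    have hqmem : q ∈ range ⇑γ := by
      obtain ⟨t, ht⟩ := mem_range_pathThrough g₃ N₃ le_rfl
      rw [hrange]; exact Or.inr ⟨t, by rw [ht, hg₃N]⟩
    set σ := fun t : ℝ => (γ.extend t).1 with hσdef
    set τ := fun t : ℝ => (γ.extend t).2 with hτdef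
    have hσ : IsReparam σ :=
      isReparam_of_path γ Prod.fst continuous_fst (fun z hz => hz.1) hrangeSq
        ⟨a, hamem, ha1⟩ ⟨b, hbmem, hb1⟩
    have hτ : IsReparam τ :=
      isReparam_of_path γ Prod.snd continuous_snd (fun z hz => hz.2) hrangeSq
        ⟨p, hpmem, hp2⟩ ⟨q, hqmem, hq2⟩
    have hbound : ∀ t : Icc (0:ℝ) 1, ‖P (σ ↑t) - Q (τ ↑t)‖ ≤ ε + η := by
      intro t
      have hz : γ.extend ↑t ∈ range ⇑γ := by
        rw [γ.extend_apply t.2]; exact mem_range_self _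
      obtain ⟨y, hy, hdy⟩ := hclose _ hz
      have h1 : dist (fdist P Q (γ.extend ↑t)) (fdist P Q y) < η :=
        hδ _ (hrangeSq hz) _ (hcSq hy) hdy
      have h2 : fdist P Q y ≤ ε := (hcF hy).2
      have h3 : fdist P Q (γ.extend ↑t) - fdist P Q y < η :=
        lt_of_le_of_lt (le_abs_self _) (by rwa [Real.dist_eq] at h1)
      have : ‖P (σ ↑t) - Q (τ ↑t)‖ = fdist P Q (γ.extend ↑t) := rfl
      rw [this]; linarith
    have hr : (⨆ t : Icc (0:ℝ) 1, ‖P (σ ↑t) - Q (τ ↑t)‖) ≤ ε + η := by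
      haveI : Nonempty (Icc (0:ℝ) 1) := ⟨⟨0, le_rfl, zero_le_one⟩⟩
      exact ciSup_le hbound
    calc weakFrechetDist d P Q ≤ ⨆ t : Icc (0:ℝ) 1, ‖P (σ ↑t) - Q (τ ↑t)‖ :=
          csInf_le (wset_bddBelow P Q) ⟨σ, τ, hσ, hτ, rfl⟩
      _ ≤ ε + η := hr
  by_contra hcon
  push_neg at hcon
  have := key ((weakFrechetDist d P Q - ε) / 2) (by linarith)
  linarith

-- Direction (b): weak Fréchet ≤ ε gives a single covering component
lemma exists_component_of_weak_le {d : ℕ} {P Q : ℝ → EuclideanSpace ℝ (Fin d)}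
    (hP : ContinuousOn P (Icc 0 1)) (hQ : ContinuousOn Q (Icc 0 1))
    {ε : ℝ} (hw : weakFrechetDist d P Q ≤ ε) :
    ∃ c : Set (ℝ × ℝ), IsComponentOf (freeSpace d P Q ε) c ∧ CoversBoth c := by
  have step1 : ∀ n : ℕ, ∃ (E : Set (ℝ × ℝ)) (xe : ℝ × ℝ), IsPreconnected E ∧
      E ⊆ freeSpace d P Q (ε + 1 / (n + 1)) ∧ CoversBoth E ∧ xe ∈ E := by
    intro n
    have hpos : (0:ℝ) < 1 / ((n:ℝ) + 1) := by positivity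
    have hlt : sInf (WSet P Q) < ε + 1 / ((n:ℝ) + 1) := lt_of_le_of_lt hw (by linarith)
    obtain ⟨r, hrW, hrlt⟩ := exists_lt_of_csInf_lt (wset_nonempty P Q) hlt
    obtain ⟨σ, τ, hσ, hτ, rfl⟩ := hrW
    set E := (fun t : ℝ => (σ t, τ t)) '' Icc 0 1 with hE
    have hmapsσ : ∀ t ∈ Icc (0:ℝ) 1, σ t ∈ Icc (0:ℝ) 1 := fun t ht =>
      hσ.2 ▸ mem_image_of_mem σ ht
    have hmapsτ : ∀ t ∈ Icc (0:ℝ) 1, τ t ∈ Icc (0:ℝ) 1 := fun t ht =>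
      hτ.2 ▸ mem_image_of_mem τ ht
    have hcont : ContinuousOn (fun t => ‖P (σ t) - Q (τ t)‖) (Icc (0:ℝ) 1) :=
      ((hP.comp hσ.1 hmapsσ).sub (hQ.comp hτ.1 hmapsτ)).norm
    obtain ⟨C, hC⟩ := isCompact_Icc.exists_bound_of_continuousOn hcont
    have hbdd : BddAbove (range fun t : Icc (0:ℝ) 1 => ‖P (σ ↑t) - Q (τ ↑t)‖) := by
      refine ⟨C, ?_⟩
      rintro _ ⟨t, rfl⟩
      exact le_trans (le_abs_self _) (by rw [← Real.norm_eq_abs]; exact hC ↑t t.2)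
    have hEF : E ⊆ freeSpace d P Q (ε + 1 / ((n:ℝ) + 1)) := by
      rintro _ ⟨t, ht, rfl⟩
      refine ⟨⟨hmapsσ t ht, hmapsτ t ht⟩, ?_⟩
      have hval : ‖P (σ t) - Q (τ t)‖ ≤ ⨆ s : Icc (0:ℝ) 1, ‖P (σ ↑s) - Q (τ ↑s)‖ :=
        le_ciSup hbdd ⟨t, ht⟩
      exact le_of_lt (lt_of_le_of_lt hval hrlt)
    refine ⟨E, (σ 0, τ 0), ?_, hEF, ⟨?_, ?_⟩, ⟨0, ⟨le_rfl, zero_le_one⟩, rfl⟩⟩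
    · exact isPreconnected_Icc.image _ (hσ.1.prodMk hτ.1)
    · have h1 : Prod.fst '' E = σ '' Icc 0 1 := by rw [hE, image_image]
      rw [h1]; exact hσ.2
    · have h1 : Prod.snd '' E = τ '' Icc 0 1 := by rw [hE, image_image]
      rw [h1]; exact hτ.2
  choose E xe hEpre hEF hEcov hxE using step1
  have hxSq : ∀ n, xe n ∈ Sq := fun n => (hEF n (hxE n)).1
  obtain ⟨xb, hxbSq, φ, hφmono, hφlim⟩ := isCompact_Sq.tendsto_subseq hxSq
  have hD : ∀ η : ℝ, 0 < η → xb ∈ freeSpace d P Q (ε + η) ∧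
      CoversBoth (connectedComponentIn (freeSpace d P Q (ε + η)) xb) := by
    intro η hη
    obtain ⟨δ, hδpos, hδ⟩ : ∃ δ > 0, ∀ z ∈ Sq, ∀ w ∈ Sq, dist z w < δ →
        dist (fdist P Q z) (fdist P Q w) < η / 2 := by
      have huc := isCompact_Sq.uniformContinuousOn_of_continuous (fdist_continuousOn hP hQ)
      rw [Metric.uniformContinuousOn_iff] at huc
      obtain ⟨δ, h1, h2⟩ := huc (η / 2) (by linarith)
      exact ⟨δ, h1, fun z hz w hw hzw => h2 z hz w hw hzw⟩
    obtain ⟨K1, hK1⟩ := Metric.tendsto_atTop.1 hφlim δ hδpos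
    obtain ⟨K2, hK2⟩ : ∃ K2 : ℕ, 1 / ((K2:ℝ) + 1) < η / 2 := exists_nat_one_div_lt (by linarith)
    set k := max K1 K2 with hk
    set y := xe (φ k) with hy
    have hyE : y ∈ E (φ k) := hxE (φ k)
    have hySq : y ∈ Sq := hxSq (φ k)
    have hyd : dist y xb < δ := hK1 k (le_max_left _ _)
    have hφk : (K2:ℝ) ≤ (φ k : ℝ) := by
      have h1 : K2 ≤ k := le_max_right _ _
      have h2 : k ≤ φ k := hφmono.le_apply
      exact_mod_cast le_trans h1 h2
    have hsmall : 1 / ((φ k : ℝ) + 1) < η / 2 := by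
      have h3 : 1 / ((φ k : ℝ) + 1) ≤ 1 / ((K2:ℝ) + 1) := by
        apply one_div_le_one_div_of_le
        · positivity
        · linarith
      linarith
    have hseg : segSet y xb ⊆ freeSpace d P Q (ε + η) := by
      intro z hz
      have hzSq : z ∈ Sq := segSet_subset_convex convex_Sq hySq hxbSq hz
      have hzd : dist z y < δ := lt_of_le_of_lt (dist_le_of_mem_segSet hz) hyd
      have hfz : dist (fdist P Q z) (fdist P Q y) < η / 2 := hδ z hzSq y hySq hzd
      have hfy : fdist P Q y ≤ ε + 1 / ((φ k : ℝ) + 1) := (hEF (φ k) hyE).2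
      refine ⟨hzSq, ?_⟩
      have h3 : fdist P Q z - fdist P Q y < η / 2 :=
        lt_of_le_of_lt (le_abs_self _) (by rwa [Real.dist_eq] at hfz)
      show fdist P Q z ≤ ε + η
      linarith
    have hEsub : E (φ k) ⊆ freeSpace d P Q (ε + η) := by
      refine (hEF (φ k)).trans (freeSpace_mono ?_)
      linarith
    have hxbF : xb ∈ freeSpace d P Q (ε + η) := hseg (right_mem_segSet y xb)
    have hunion : IsPreconnected (E (φ k) ∪ segSet y xb) :=
      IsPreconnected.union y hyE (left_mem_segSet y xb) (hEpre (φ k)) (isPreconnected_segSet y xb)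
    have hsubC : E (φ k) ∪ segSet y xb ⊆ connectedComponentIn (freeSpace d P Q (ε + η)) xb :=
      hunion.subset_connectedComponentIn (Or.inr (right_mem_segSet y xb))
        (union_subset hEsub hseg)
    refine ⟨hxbF, ?_, ?_⟩
    · apply subset_antisymm
      · rintro _ ⟨z, hz, rfl⟩
        exact ((freeSpace_subset_Sq _) (connectedComponentIn_subset _ _ hz)).1
      · rw [← (hEcov (φ k)).1]
        exact image_mono (subset_union_left.trans hsubC)
    · apply subset_antisymm
      · rintro _ ⟨z, hz, rfl⟩
        exact ((freeSpace_subset_Sq _) (connectedComponentIn_subset _ _ hz)).2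
      · rw [← (hEcov (φ k)).2]
        exact image_mono (subset_union_left.trans hsubC)
  set D : ℕ → Set (ℝ × ℝ) :=
    fun n => connectedComponentIn (freeSpace d P Q (ε + 1 / ((n:ℝ) + 1))) xb with hDdef
  have hposn : ∀ n : ℕ, (0:ℝ) < 1 / ((n:ℝ) + 1) := fun n => by positivity
  have hxbD : ∀ n, xb ∈ D n := fun n => mem_connectedComponentIn (hD _ (hposn n)).1
  have hDcov : ∀ n, CoversBoth (D n) := fun n => (hD _ (hposn n)).2
  have hDsub : ∀ n, D (n + 1) ⊆ D n := by
    intro n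
    apply connectedComponentIn_mono
    apply freeSpace_mono
    have h1 : 1 / ((n:ℝ) + 1 + 1) ≤ 1 / ((n:ℝ) + 1) := by
      apply one_div_le_one_div_of_le
      · positivity
      · linarith
    push_cast
    linarith
  have hDF : ∀ n, D n ⊆ freeSpace d P Q (ε + 1 / ((n:ℝ) + 1)) := fun n =>
    connectedComponentIn_subset _ _
  have hDcomp : ∀ n, IsCompact (D n) := fun n =>
    isCompact_connectedComponentIn (isCompact_freeSpace hP hQ _) (hD _ (hposn n)).1
  have hDconn : ∀ n, IsPreconnected (D n) := fun n => isPreconnected_connectedComponentIn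
  set C := ⋂ n, D n with hCdef
  have hCF : C ⊆ freeSpace d P Q ε := by
    intro p hp
    rw [hCdef, mem_iInter] at hp
    have hpSq : p ∈ Sq := (hDF 0 (hp 0)).1
    refine ⟨hpSq, ?_⟩
    show fdist P Q p ≤ ε
    by_contra hcon
    push_neg at hcon
    obtain ⟨n, hn⟩ := exists_nat_one_div_lt (show (0:ℝ) < fdist P Q p - ε by linarith)
    have h2 : fdist P Q p ≤ ε + 1 / ((n:ℝ) + 1) := (hDF n (hp n)).2
    linarith
  have hCconn : IsPreconnected C := isPreconnected_iInter_of_nested hDsub hDcomp hDconn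
  have hxbC : xb ∈ C := mem_iInter.2 hxbD
  have hCcov1 : Icc (0:ℝ) 1 ⊆ Prod.fst '' C := by
    intro s hs
    have hA : ∀ n, (D n ∩ {p : ℝ × ℝ | p.1 = s}).Nonempty := by
      intro n
      have hs' : s ∈ Prod.fst '' D n := by rw [(hDcov n).1]; exact hs
      obtain ⟨p, hp, hps⟩ := hs'
      exact ⟨p, hp, hps⟩
    obtain ⟨p, hp⟩ := IsCompact.nonempty_iInter_of_sequence_nonempty_isCompact_isClosed
      (fun n => D n ∩ {p : ℝ × ℝ | p.1 = s})
      (fun n => inter_subset_inter_left _ (hDsub n)) hA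
      ((hDcomp 0).inter_right (isClosed_eq continuous_fst continuous_const))
      (fun n => (hDcomp n).isClosed.inter (isClosed_eq continuous_fst continuous_const))
    simp only [mem_iInter, mem_inter_iff] at hp
    exact ⟨p, mem_iInter.2 fun n => (hp n).1, (hp 0).2⟩
  have hCcov2 : Icc (0:ℝ) 1 ⊆ Prod.snd '' C := by
    intro s hs
    have hA : ∀ n, (D n ∩ {p : ℝ × ℝ | p.2 = s}).Nonempty := by
      intro n
      have hs' : s ∈ Prod.snd '' D n := by rw [(hDcov n).2]; exact hs
      obtain ⟨p, hp, hps⟩ := hs'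
      exact ⟨p, hp, hps⟩
    obtain ⟨p, hp⟩ := IsCompact.nonempty_iInter_of_sequence_nonempty_isCompact_isClosed
      (fun n => D n ∩ {p : ℝ × ℝ | p.2 = s})
      (fun n => inter_subset_inter_left _ (hDsub n)) hA
      ((hDcomp 0).inter_right (isClosed_eq continuous_snd continuous_const))
      (fun n => (hDcomp n).isClosed.inter (isClosed_eq continuous_snd continuous_const))
    simp only [mem_iInter, mem_inter_iff] at hp
    exact ⟨p, mem_iInter.2 fun n => (hp n).1, (hp 0).2⟩
  have hCc : C ⊆ connectedComponentIn (freeSpace d P Q ε) xb :=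
    hCconn.subset_connectedComponentIn hxbC hCF
  refine ⟨connectedComponentIn (freeSpace d P Q ε) xb, ⟨xb, hCF hxbC, rfl⟩, ?_, ?_⟩
  · apply subset_antisymm
    · rintro _ ⟨z, hz, rfl⟩
      exact ((freeSpace_subset_Sq _) (connectedComponentIn_subset _ _ hz)).1
    · exact hCcov1.trans (image_mono hCc)
  · apply subset_antisymm
    · rintro _ ⟨z, hz, rfl⟩
      exact ((freeSpace_subset_Sq _) (connectedComponentIn_subset _ _ hz)).2
    · exact hCcov2.trans (image_mono hCc)
/-- For polygonal curves, the 1-Fréchet distance equals the weak Fréchet distance;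
equivalently, for every `ε ≥ 0` a single connected component of `F_ε(P,Q)` covers
both parameter spaces if and only if `δ_wF(P,Q) ≤ ε`. -/
theorem oneFrechet_eq_weakFrechet
    (d n m : ℕ) (P Q : ℝ → EuclideanSpace ℝ (Fin d))
    (hP : IsPolygonal d n P) (hQ : IsPolygonal d m Q) :
    kFrechetDist d 1 P Q = weakFrechetDist d P Q ∧
    ∀ ε : ℝ, 0 ≤ ε →
      ((∃ c : Set (ℝ × ℝ), IsComponentOf (freeSpace d P Q ε) c ∧ CoversBoth c) ↔
        weakFrechetDist d P Q ≤ ε) := by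

  have hPc := hP.1
  have hQc := hQ.1
  have main : ∀ ε : ℝ, 0 ≤ ε →
      ((∃ c : Set (ℝ × ℝ), IsComponentOf (freeSpace d P Q ε) c ∧ CoversBoth c) ↔
        weakFrechetDist d P Q ≤ ε) := by
    intro ε hε
    constructor
    · rintro ⟨c, hc, hcov⟩
      exact weak_le_of_component hPc hQc hc hcov
    · intro hwle
      exact exists_component_of_weak_le hPc hQc hwle
  refine ⟨?_, main⟩
  have hw0 : 0 ≤ weakFrechetDist d P Q := weakFrechetDist_nonneg P Q
  have hset : {ε : ℝ | 0 ≤ ε ∧ ∃ S : Set (Set (ℝ × ℝ)),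
      (∀ c ∈ S, IsComponentOf (freeSpace d P Q ε) c) ∧ S.Finite ∧ S.ncard ≤ 1 ∧
      CoversBoth (⋃₀ S)} = Ici (weakFrechetDist d P Q) := by
    ext ε
    simp only [mem_setOf_eq, mem_Ici]
    constructor
    · rintro ⟨hε, S, hScomp, hSfin, hScard, hScov⟩
      have hSne : S.Nonempty := by
        rcases S.eq_empty_or_nonempty with rfl | h
        · exfalso
          have h1 := hScov.1
          rw [sUnion_empty, image_empty] at h1
          exact (nonempty_Icc.2 zero_le_one).ne_empty h1.symm
        · exact h
      obtain ⟨c, hcS⟩ := hSne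
      have hSeq : S = {c} := by
        apply subset_antisymm
        · intro x hx
          exact (Set.ncard_le_one_iff hSfin).1 hScard hx hcS
        · intro x hx
          rw [mem_singleton_iff] at hx
          rw [hx]; exact hcS
      rw [hSeq, sUnion_singleton] at hScov
      exact (main ε hε).1 ⟨c, hScomp c hcS, hScov⟩
    · intro h
      have hε : 0 ≤ ε := hw0.trans h
      obtain ⟨c, hc, hcov⟩ := (main ε hε).2 h
      refine ⟨hε, {c}, ?_, finite_singleton c, ?_, ?_⟩
      · intro c' hc'
        rw [mem_singleton_iff] at hc'
        rw [hc']; exact hc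
      · simp
      · rwa [sUnion_singleton]
  show sInf _ = weakFrechetDist d P Q
  rw [hset, csInf_Ici]
end
end

section
/- In the box-problem construction from a 3-SAT formula, the total number of boxes equals 4n + 2(m₁ + 2m₂ + 3m₃) = 2k, where n is the number of variables, m_i is the number of clauses with exactly i literals, and k = 2n + m₁ + 2m₂ + 3m₃; moreover, for every integer i ∈ {1, …, 2n+s⁺_n+s⁻_n}, the unit interval (i, i+1) on the left edge of B can be covered by exactly two of the boxes, one labelled with a variable v and the other labelled ¬v for the same variable v. -/
open Set Finset

noncomputable section

/-- A 3-SAT instance: `n` variables, `m` clauses, each clause a finite set of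
literals, a literal being a pair (variable, sign) with `true` = positive. -/
abbrev Clauses (n m : ℕ) := Fin m → Finset (Fin n × Bool)

/-- `litCount C i s` is the number of clauses containing the literal `(i, s)`
(so `a⁺_i = litCount C i true` and `a⁻_i = litCount C i false`). -/
def litCount {n m : ℕ} (C : Clauses n m) (i : Fin n) (s : Bool) : ℕ :=
  (Finset.univ.filter (fun h : Fin m => (i, s) ∈ C h)).card

/-- `sCount C s t = Σ_{k < t} litCount C k s`; with 1-indexed variables this is
`s⁺_{t}` (for `s = true`), e.g. `sCount C true n = s⁺_n` and, for a 0-indexed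
variable `i`, `sCount C true i = s⁺_{i-1}`. -/
def sCount {n m : ℕ} (C : Clauses n m) (s : Bool) (t : ℕ) : ℕ :=
  ∑ k ∈ Finset.univ.filter (fun k : Fin n => (k : ℕ) < t), litCount C k s

/-- The formula is satisfiable: some assignment makes every clause contain a true
literal. -/
def SatSatisfiable {n m : ℕ} (C : Clauses n m) : Prop :=
  ∃ f : Fin n → Bool, ∀ h : Fin m, ∃ l ∈ C h, f l.1 = l.2

/-- The set of labelled boxes of the box-problem construction. A labelled box is a
pair `((x, y, w), ℓ)` of an axis-aligned unit-height box with bottom-left corner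
`(x, y)` and width `w`, and a label `ℓ = (i, s)` meaning the literal `v_i` (if
`s = true`) or `¬v_i` (if `s = false`). The functions `jpos i` and `jneg i`
enumerate (with values in `{1, …, a⁺_i}` resp. `{1, …, a⁻_i}`) the clauses
containing `v_i` positively resp. negatively. -/
def boxSet {n m : ℕ} (C : Clauses n m) (jpos jneg : Fin n → Fin m → ℕ) :
    Set ((ℝ × ℝ × ℝ) × (Fin n × Bool)) :=
  {b |
    -- (i) variable boxes
    (∃ i : Fin n, b = ((((i : ℕ) + 1 : ℝ), ((i : ℕ) + 1 : ℝ), 1), (i, false)))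
    ∨ (∃ i : Fin n,
        b = ((((i : ℕ) + 1 : ℝ), ((i : ℕ) + 1 + n + sCount C true n : ℝ), 1), (i, true)))
    -- (ii) positive split boxes
    ∨ (∃ i : Fin n,
        b = (((1 + n + sCount C true i : ℝ), ((i : ℕ) + 1 : ℝ),
              (litCount C i true : ℝ)), (i, true)))
    ∨ (∃ i : Fin n, ∃ j : ℕ, 1 ≤ j ∧ j ≤ litCount C i true ∧
        b = (((n + sCount C true i + j : ℝ), (n + sCount C true i + j : ℝ), 1),
             (i, false)))
    -- (iii) negative split boxes
    ∨ (∃ i : Fin n,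
        b = (((1 + n + sCount C true n + sCount C false i : ℝ),
              (n + sCount C true n + (i : ℕ) + 1 : ℝ),
              (litCount C i false : ℝ)), (i, false)))
    ∨ (∃ i : Fin n, ∃ j : ℕ, 1 ≤ j ∧ j ≤ litCount C i false ∧
        b = (((n + sCount C true n + sCount C false i + j : ℝ),
              (2 * n + sCount C true n + sCount C false i + j : ℝ), 1), (i, true)))
    -- (iv) clause boxes, with I(c_h) = n + s⁺_n + s⁻_n + h (1-indexed h)
    ∨ (∃ i : Fin n, ∃ h : Fin m, (i, true) ∈ C h ∧
        b = (((n + sCount C true n + sCount C false n + (h : ℕ) + 1 : ℝ),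
              (n + sCount C true i + jpos i h : ℝ), 1), (i, true)))
    ∨ (∃ i : Fin n, ∃ h : Fin m, (i, false) ∈ C h ∧
        b = (((n + sCount C true n + sCount C false n + (h : ℕ) + 1 : ℝ),
              (2 * n + sCount C true n + sCount C false i + jneg i h : ℝ), 1),
             (i, false)))}

/-- `S` covers the bottom edge `[1, 1+n+s⁺_n+s⁻_n+m] × {1}` of the bounding box:
every such x-coordinate lies in `[x, x+w]` for some box in `S`. -/
def CoversBottomEdge {n m : ℕ} (C : Clauses n m)
    (S : Set ((ℝ × ℝ × ℝ) × (Fin n × Bool))) : Prop :=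
  ∀ x ∈ Icc (1 : ℝ) (1 + n + sCount C true n + sCount C false n + m),
    ∃ b ∈ S, x ∈ Icc b.1.1 (b.1.1 + b.1.2.2)

/-- `S` covers the left edge `{1} × [1, 1+2n+s⁺_n+s⁻_n]` of the bounding box:
every such y-coordinate lies in `[y, y+1]` for some box in `S`. -/
def CoversLeftEdge {n m : ℕ} (C : Clauses n m)
    (S : Set ((ℝ × ℝ × ℝ) × (Fin n × Bool))) : Prop :=
  ∀ y ∈ Icc (1 : ℝ) (1 + 2 * n + sCount C true n + sCount C false n),
    ∃ b ∈ S, y ∈ Icc b.1.2.1 (b.1.2.1 + 1)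

/-- `clauseCount C i` is the number of clauses with exactly `i` literals. -/
def clauseCount {n m : ℕ} (C : Clauses n m) (i : ℕ) : ℕ :=
  (Finset.univ.filter (fun h : Fin m => (C h).card = i)).card

section Helpers
variable {n m : ℕ} (C : Clauses n m) (s : Bool)

lemma sCount_mono {t t' : ℕ} (h : t ≤ t') : sCount C s t ≤ sCount C s t' := by
  apply Finset.sum_le_sum_of_subset
  intro k hk
  simp only [Finset.mem_filter, Finset.mem_univ, true_and] at *
  omega

lemma sCount_zero : sCount C s 0 = 0 := by
  simp [sCount]

lemma sCount_top {t : ℕ} (h : n ≤ t) : sCount C s t = sCount C s n := by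
  unfold sCount
  congr 1
  ext k
  simp only [Finset.mem_filter, Finset.mem_univ, true_and]
  have := k.isLt
  omega

lemma sCount_succ (i : Fin n) : sCount C s ((i : ℕ) + 1) = sCount C s i + litCount C i s := by
  unfold sCount
  have : (Finset.univ.filter (fun k : Fin n => (k : ℕ) < (i : ℕ) + 1))
      = insert i (Finset.univ.filter (fun k : Fin n => (k : ℕ) < (i : ℕ))) := by
    ext k
    simp only [Finset.mem_filter, Finset.mem_univ, true_and, Finset.mem_insert]
    constructor
    · intro hk
      rcases Nat.lt_succ_iff_lt_or_eq.mp hk with h | h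
      · exact Or.inr h
      · exact Or.inl (Fin.ext h)
    · rintro (rfl | h)
      · omega
      · omega
  rw [this, Finset.sum_insert (by simp)]
  ring

lemma sCount_succ_le (i : Fin n) : sCount C s i + litCount C i s ≤ sCount C s n := by
  rw [← sCount_succ]
  exact sCount_mono C s i.isLt

lemma exists_decomp {t : ℕ} (h1 : 1 ≤ t) (h2 : t ≤ sCount C s n) :
    ∃ i : Fin n, ∃ j : ℕ, 1 ≤ j ∧ j ≤ litCount C i s ∧ sCount C s i + j = t := by
  have hn : 0 < n := by
    rcases Nat.eq_zero_or_pos n with h | h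
    · exfalso; subst h; rw [sCount_top C s (le_refl 0), sCount_zero] at h2; omega
    · exact h
  have hex : ∃ k, t ≤ sCount C s (k + 1) := ⟨n - 1, by
    rw [show n - 1 + 1 = n by omega]; exact h2⟩
  classical
  let k0 := Nat.find hex
  have hk0 : t ≤ sCount C s (k0 + 1) := Nat.find_spec hex
  have hk0n : k0 < n := by
    by_contra hc
    push_neg at hc
    have := Nat.find_min hex (m := n - 1) (by omega)
    rw [show n - 1 + 1 = n by omega] at this
    omega
  have hlt : sCount C s k0 < t := by
    rcases Nat.eq_zero_or_pos k0 with h | h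
    · rw [h, sCount_zero]; omega
    · have := Nat.find_min hex (m := k0 - 1) (by omega)
      rw [show k0 - 1 + 1 = k0 by omega] at this
      omega
  refine ⟨⟨k0, hk0n⟩, t - sCount C s k0, by omega, ?_, by simp; omega⟩
  have := sCount_succ C s ⟨k0, hk0n⟩
  simp only at this
  omega

lemma decomp_unique {i i' : Fin n} {j j' : ℕ} (hj1 : 1 ≤ j) (hj2 : j ≤ litCount C i s)
    (hj1' : 1 ≤ j') (hj2' : j' ≤ litCount C i' s)
    (heq : sCount C s i + j = sCount C s i' + j') : i = i' ∧ j = j' := by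
  have key : ∀ a a' : Fin n, ∀ b b' : ℕ, 1 ≤ b → b ≤ litCount C a s → 1 ≤ b' →
      sCount C s a + b = sCount C s a' + b' → (a : ℕ) < a' → False := by
    intro a a' b b' hb1 hb2 hb1' he hlt
    have h1 : sCount C s ((a : ℕ) + 1) ≤ sCount C s a' := sCount_mono C s (by omega)
    rw [sCount_succ] at h1
    omega
  have hii : (i : ℕ) = (i' : ℕ) := by
    rcases Nat.lt_trichotomy (i : ℕ) (i' : ℕ) with h | h | h
    · exact absurd (key i i' j j' hj1 hj2 hj1' heq h) (by simp)
    · exact h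
    · exact absurd (key i' i j' j hj1' hj2' hj1 heq.symm h) (by simp)
  have : i = i' := Fin.ext hii
  subst this
  exact ⟨rfl, by omega⟩

end Helpers

lemma sCount_total {n m : ℕ} (C : Clauses n m) :
    sCount C true n + sCount C false n = ∑ h : Fin m, (C h).card := by
  have hs : ∀ s : Bool, sCount C s n = ∑ k : Fin n, litCount C k s := by
    intro s
    unfold sCount
    congr 1
    ext k
    simp [k.isLt]
  rw [hs, hs]
  have : ∀ s : Bool, ∑ k : Fin n, litCount C k s
      = ∑ h : Fin m, (Finset.univ.filter (fun k : Fin n => (k, s) ∈ C h)).card := by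
    intro s
    unfold litCount
    simp only [Finset.card_filter]
    rw [Finset.sum_comm]
  rw [this, this, ← Finset.sum_add_distrib]
  apply Finset.sum_congr rfl
  intro h _
  simp only [Finset.card_filter]
  have : #(C h) = ∑ p ∈ (Finset.univ : Finset (Fin n × Bool)), if p ∈ C h then 1 else 0 := by
    rw [Finset.sum_ite_mem, Finset.univ_inter, Finset.card_eq_sum_ones]
  rw [this, Fintype.sum_prod_type, ← Finset.sum_add_distrib]
  exact Finset.sum_congr rfl fun i _ => by rw [Fintype.sum_bool]

lemma sum_card_eq {n m : ℕ} (C : Clauses n m)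
    (hsize : ∀ h : Fin m, (C h).card ≤ 3) (hne : ∀ h : Fin m, (C h).Nonempty) :
    ∑ h : Fin m, (C h).card = clauseCount C 1 + 2 * clauseCount C 2 + 3 * clauseCount C 3 := by
  have hmaps : ∀ h ∈ (Finset.univ : Finset (Fin m)), (C h).card ∈ Finset.range 4 := by
    intro h _
    simp only [Finset.mem_range]
    have := hsize h
    omega
  rw [← Finset.sum_fiberwise_of_maps_to hmaps]
  have hinner : ∀ c, ∑ h ∈ Finset.univ.filter (fun h : Fin m => (C h).card = c), (C h).card
      = c * clauseCount C c := by
    intro c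
    rw [Finset.sum_congr rfl (fun h hh => (Finset.mem_filter.mp hh).2), Finset.sum_const,
      smul_eq_mul, mul_comm]
    rfl
  have h0 : clauseCount C 0 = 0 := by
    unfold clauseCount
    rw [Finset.card_eq_zero, Finset.filter_eq_empty_iff]
    intro h _
    have := hne h
    simp only [← Finset.card_pos] at this
    omega
  simp only [Finset.sum_range_succ, Finset.range_zero, Finset.sum_empty, hinner, h0]
  ring

lemma box_uniq {n m : ℕ} (C : Clauses n m) (jpos jneg : Fin n → Fin m → ℕ)
    (hjpos : ∀ i : Fin n,
      Set.BijOn (jpos i) {h : Fin m | (i, true) ∈ C h} (Set.Icc 1 (litCount C i true)))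
    (hjneg : ∀ i : Fin n,
      Set.BijOn (jneg i) {h : Fin m | (i, false) ∈ C h} (Set.Icc 1 (litCount C i false)))
    {b b' : (ℝ × ℝ × ℝ) × (Fin n × Bool)}
    (hb : b ∈ boxSet C jpos jneg) (hb' : b' ∈ boxSet C jpos jneg)
    (hy : b.1.2.1 = b'.1.2.1) (hsign : b.2.2 = b'.2.2) : b = b' := by
  simp only [boxSet, Set.mem_setOf_eq] at hb hb'
  rcases hb with ⟨i, rfl⟩ | ⟨i, rfl⟩ | ⟨i, rfl⟩ | ⟨i, j, hj1, hj2, rfl⟩ | ⟨i, rfl⟩ | ⟨i, j, hj1, hj2, rfl⟩ | ⟨i, h, hch, rfl⟩ | ⟨i, h, hch, rfl⟩ <;>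
    rcases hb' with ⟨i', rfl⟩ | ⟨i', rfl⟩ | ⟨i', rfl⟩ | ⟨i', j', hj1', hj2', rfl⟩ | ⟨i', rfl⟩ | ⟨i', j', hj1', hj2', rfl⟩ | ⟨i', h', hch', rfl⟩ | ⟨i', h', hch', rfl⟩
  -- case 1 vs 1
  · simp only at hy
    have fa : (i : ℕ) < n := i.isLt
    have fa' : (i' : ℕ) < n := i'.isLt
    norm_cast at hy
    have : i = i' := Fin.ext (by omega)
    subst this
    rfl
  -- case 1 vs 2
  · simp at hsign
  -- case 1 vs 3
  · simp at hsign
  -- case 1 vs 4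
  · simp only at hy
    have fa : (i : ℕ) < n := i.isLt
    have fa' : sCount C true i' + litCount C i' true ≤ sCount C true n := sCount_succ_le C true i'
    exfalso
    norm_cast at hy
    omega
  -- case 1 vs 5
  · simp only at hy
    have fa : (i : ℕ) < n := i.isLt
    have fa' : (i' : ℕ) < n := i'.isLt
    exfalso
    norm_cast at hy
    omega
  -- case 1 vs 6
  · simp at hsign
  -- case 1 vs 7
  · simp at hsign
  -- case 1 vs 8
  · simp only at hy
    have fa : (i : ℕ) < n := i.isLt
    have fb' : 1 ≤ jneg i' h' ∧ jneg i' h' ≤ litCount C i' false := Set.mem_Icc.mp ((hjneg i').mapsTo hch')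
    have fa' : sCount C false i' + litCount C i' false ≤ sCount C false n := sCount_succ_le C false i'
    exfalso
    norm_cast at hy
    omega
  -- case 2 vs 1
  · simp at hsign
  -- case 2 vs 2
  · simp only at hy
    have fa : (i : ℕ) < n := i.isLt
    have fa' : (i' : ℕ) < n := i'.isLt
    norm_cast at hy
    have : i = i' := Fin.ext (by omega)
    subst this
    rfl
  -- case 2 vs 3
  · simp only at hy
    have fa : (i : ℕ) < n := i.isLt
    have fa' : (i' : ℕ) < n := i'.isLt
    exfalso
    norm_cast at hy
    omega
  -- case 2 vs 4
  · simp at hsign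
  -- case 2 vs 5
  · simp at hsign
  -- case 2 vs 6
  · simp only at hy
    have fa : (i : ℕ) < n := i.isLt
    have fa' : sCount C false i' + litCount C i' false ≤ sCount C false n := sCount_succ_le C false i'
    exfalso
    norm_cast at hy
    omega
  -- case 2 vs 7
  · simp only at hy
    have fa : (i : ℕ) < n := i.isLt
    have fb' : 1 ≤ jpos i' h' ∧ jpos i' h' ≤ litCount C i' true := Set.mem_Icc.mp ((hjpos i').mapsTo hch')
    have fa' : sCount C true i' + litCount C i' true ≤ sCount C true n := sCount_succ_le C true i'
    exfalso
    norm_cast at hy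
    omega
  -- case 2 vs 8
  · simp at hsign
  -- case 3 vs 1
  · simp at hsign
  -- case 3 vs 2
  · simp only at hy
    have fa : (i : ℕ) < n := i.isLt
    have fa' : (i' : ℕ) < n := i'.isLt
    exfalso
    norm_cast at hy
    omega
  -- case 3 vs 3
  · simp only at hy
    have fa : (i : ℕ) < n := i.isLt
    have fa' : (i' : ℕ) < n := i'.isLt
    norm_cast at hy
    have : i = i' := Fin.ext (by omega)
    subst this
    rfl
  -- case 3 vs 4
  · simp at hsign
  -- case 3 vs 5
  · simp at hsign
  -- case 3 vs 6
  · simp only at hy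
    have fa : (i : ℕ) < n := i.isLt
    have fa' : sCount C false i' + litCount C i' false ≤ sCount C false n := sCount_succ_le C false i'
    exfalso
    norm_cast at hy
    omega
  -- case 3 vs 7
  · simp only at hy
    have fa : (i : ℕ) < n := i.isLt
    have fb' : 1 ≤ jpos i' h' ∧ jpos i' h' ≤ litCount C i' true := Set.mem_Icc.mp ((hjpos i').mapsTo hch')
    have fa' : sCount C true i' + litCount C i' true ≤ sCount C true n := sCount_succ_le C true i'
    exfalso
    norm_cast at hy
    omega
  -- case 3 vs 8
  · simp at hsign
  -- case 4 vs 1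
  · simp only at hy
    have fa : sCount C true i + litCount C i true ≤ sCount C true n := sCount_succ_le C true i
    have fa' : (i' : ℕ) < n := i'.isLt
    exfalso
    norm_cast at hy
    omega
  -- case 4 vs 2
  · simp at hsign
  -- case 4 vs 3
  · simp at hsign
  -- case 4 vs 4
  · simp only at hy
    have fa : sCount C true i + litCount C i true ≤ sCount C true n := sCount_succ_le C true i
    have fa' : sCount C true i' + litCount C i' true ≤ sCount C true n := sCount_succ_le C true i'
    norm_cast at hy
    obtain ⟨h1, h2⟩ := decomp_unique C true hj1 hj2 hj1' hj2' (by omega)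
    subst h1
    subst h2
    rfl
  -- case 4 vs 5
  · simp only at hy
    have fa : sCount C true i + litCount C i true ≤ sCount C true n := sCount_succ_le C true i
    have fa' : (i' : ℕ) < n := i'.isLt
    exfalso
    norm_cast at hy
    omega
  -- case 4 vs 6
  · simp at hsign
  -- case 4 vs 7
  · simp at hsign
  -- case 4 vs 8
  · simp only at hy
    have fa : sCount C true i + litCount C i true ≤ sCount C true n := sCount_succ_le C true i
    have fb' : 1 ≤ jneg i' h' ∧ jneg i' h' ≤ litCount C i' false := Set.mem_Icc.mp ((hjneg i').mapsTo hch')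
    have fa' : sCount C false i' + litCount C i' false ≤ sCount C false n := sCount_succ_le C false i'
    exfalso
    norm_cast at hy
    omega
  -- case 5 vs 1
  · simp only at hy
    have fa : (i : ℕ) < n := i.isLt
    have fa' : (i' : ℕ) < n := i'.isLt
    exfalso
    norm_cast at hy
    omega
  -- case 5 vs 2
  · simp at hsign
  -- case 5 vs 3
  · simp at hsign
  -- case 5 vs 4
  · simp only at hy
    have fa : (i : ℕ) < n := i.isLt
    have fa' : sCount C true i' + litCount C i' true ≤ sCount C true n := sCount_succ_le C true i'
    exfalso
    norm_cast at hy
    omega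
  -- case 5 vs 5
  · simp only at hy
    have fa : (i : ℕ) < n := i.isLt
    have fa' : (i' : ℕ) < n := i'.isLt
    norm_cast at hy
    have : i = i' := Fin.ext (by omega)
    subst this
    rfl
  -- case 5 vs 6
  · simp at hsign
  -- case 5 vs 7
  · simp at hsign
  -- case 5 vs 8
  · simp only at hy
    have fa : (i : ℕ) < n := i.isLt
    have fb' : 1 ≤ jneg i' h' ∧ jneg i' h' ≤ litCount C i' false := Set.mem_Icc.mp ((hjneg i').mapsTo hch')
    have fa' : sCount C false i' + litCount C i' false ≤ sCount C false n := sCount_succ_le C false i'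
    exfalso
    norm_cast at hy
    omega
  -- case 6 vs 1
  · simp at hsign
  -- case 6 vs 2
  · simp only at hy
    have fa : sCount C false i + litCount C i false ≤ sCount C false n := sCount_succ_le C false i
    have fa' : (i' : ℕ) < n := i'.isLt
    exfalso
    norm_cast at hy
    omega
  -- case 6 vs 3
  · simp only at hy
    have fa : sCount C false i + litCount C i false ≤ sCount C false n := sCount_succ_le C false i
    have fa' : (i' : ℕ) < n := i'.isLt
    exfalso
    norm_cast at hy
    omega
  -- case 6 vs 4
  · simp at hsign
  -- case 6 vs 5
  · simp at hsign
  -- case 6 vs 6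
  · simp only at hy
    have fa : sCount C false i + litCount C i false ≤ sCount C false n := sCount_succ_le C false i
    have fa' : sCount C false i' + litCount C i' false ≤ sCount C false n := sCount_succ_le C false i'
    norm_cast at hy
    obtain ⟨h1, h2⟩ := decomp_unique C false hj1 hj2 hj1' hj2' (by omega)
    subst h1
    subst h2
    rfl
  -- case 6 vs 7
  · simp only at hy
    have fa : sCount C false i + litCount C i false ≤ sCount C false n := sCount_succ_le C false i
    have fb' : 1 ≤ jpos i' h' ∧ jpos i' h' ≤ litCount C i' true := Set.mem_Icc.mp ((hjpos i').mapsTo hch')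
    have fa' : sCount C true i' + litCount C i' true ≤ sCount C true n := sCount_succ_le C true i'
    exfalso
    norm_cast at hy
    omega
  -- case 6 vs 8
  · simp at hsign
  -- case 7 vs 1
  · simp at hsign
  -- case 7 vs 2
  · simp only at hy
    have fb : 1 ≤ jpos i h ∧ jpos i h ≤ litCount C i true := Set.mem_Icc.mp ((hjpos i).mapsTo hch)
    have fa : sCount C true i + litCount C i true ≤ sCount C true n := sCount_succ_le C true i
    have fa' : (i' : ℕ) < n := i'.isLt
    exfalso
    norm_cast at hy
    omega
  -- case 7 vs 3
  · simp only at hy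
    have fb : 1 ≤ jpos i h ∧ jpos i h ≤ litCount C i true := Set.mem_Icc.mp ((hjpos i).mapsTo hch)
    have fa : sCount C true i + litCount C i true ≤ sCount C true n := sCount_succ_le C true i
    have fa' : (i' : ℕ) < n := i'.isLt
    exfalso
    norm_cast at hy
    omega
  -- case 7 vs 4
  · simp at hsign
  -- case 7 vs 5
  · simp at hsign
  -- case 7 vs 6
  · simp only at hy
    have fb : 1 ≤ jpos i h ∧ jpos i h ≤ litCount C i true := Set.mem_Icc.mp ((hjpos i).mapsTo hch)
    have fa : sCount C true i + litCount C i true ≤ sCount C true n := sCount_succ_le C true i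
    have fa' : sCount C false i' + litCount C i' false ≤ sCount C false n := sCount_succ_le C false i'
    exfalso
    norm_cast at hy
    omega
  -- case 7 vs 7
  · simp only at hy
    have fb : 1 ≤ jpos i h ∧ jpos i h ≤ litCount C i true := Set.mem_Icc.mp ((hjpos i).mapsTo hch)
    have fa : sCount C true i + litCount C i true ≤ sCount C true n := sCount_succ_le C true i
    have fb' : 1 ≤ jpos i' h' ∧ jpos i' h' ≤ litCount C i' true := Set.mem_Icc.mp ((hjpos i').mapsTo hch')
    have fa' : sCount C true i' + litCount C i' true ≤ sCount C true n := sCount_succ_le C true i'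
    norm_cast at hy
    obtain ⟨h1, h2⟩ := decomp_unique C true fb.1 fb.2 fb'.1 fb'.2 (by omega)
    subst h1
    have : h = h' := (hjpos i).injOn hch hch' h2
    subst this
    rfl
  -- case 7 vs 8
  · simp at hsign
  -- case 8 vs 1
  · simp only at hy
    have fb : 1 ≤ jneg i h ∧ jneg i h ≤ litCount C i false := Set.mem_Icc.mp ((hjneg i).mapsTo hch)
    have fa : sCount C false i + litCount C i false ≤ sCount C false n := sCount_succ_le C false i
    have fa' : (i' : ℕ) < n := i'.isLt
    exfalso
    norm_cast at hy
    omega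
  -- case 8 vs 2
  · simp at hsign
  -- case 8 vs 3
  · simp at hsign
  -- case 8 vs 4
  · simp only at hy
    have fb : 1 ≤ jneg i h ∧ jneg i h ≤ litCount C i false := Set.mem_Icc.mp ((hjneg i).mapsTo hch)
    have fa : sCount C false i + litCount C i false ≤ sCount C false n := sCount_succ_le C false i
    have fa' : sCount C true i' + litCount C i' true ≤ sCount C true n := sCount_succ_le C true i'
    exfalso
    norm_cast at hy
    omega
  -- case 8 vs 5
  · simp only at hy
    have fb : 1 ≤ jneg i h ∧ jneg i h ≤ litCount C i false := Set.mem_Icc.mp ((hjneg i).mapsTo hch)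
    have fa : sCount C false i + litCount C i false ≤ sCount C false n := sCount_succ_le C false i
    have fa' : (i' : ℕ) < n := i'.isLt
    exfalso
    norm_cast at hy
    omega
  -- case 8 vs 6
  · simp at hsign
  -- case 8 vs 7
  · simp at hsign
  -- case 8 vs 8
  · simp only at hy
    have fb : 1 ≤ jneg i h ∧ jneg i h ≤ litCount C i false := Set.mem_Icc.mp ((hjneg i).mapsTo hch)
    have fa : sCount C false i + litCount C i false ≤ sCount C false n := sCount_succ_le C false i
    have fb' : 1 ≤ jneg i' h' ∧ jneg i' h' ≤ litCount C i' false := Set.mem_Icc.mp ((hjneg i').mapsTo hch')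
    have fa' : sCount C false i' + litCount C i' false ≤ sCount C false n := sCount_succ_le C false i'
    norm_cast at hy
    obtain ⟨h1, h2⟩ := decomp_unique C false fb.1 fb.2 fb'.1 fb'.2 (by omega)
    subst h1
    have : h = h' := (hjneg i).injOn hch hch' h2
    subst this
    rfl

lemma box_range {n m : ℕ} (C : Clauses n m) (jpos jneg : Fin n → Fin m → ℕ)
    (hjpos : ∀ i : Fin n,
      Set.BijOn (jpos i) {h : Fin m | (i, true) ∈ C h} (Set.Icc 1 (litCount C i true)))
    (hjneg : ∀ i : Fin n,
      Set.BijOn (jneg i) {h : Fin m | (i, false) ∈ C h} (Set.Icc 1 (litCount C i false)))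
    {b : (ℝ × ℝ × ℝ) × (Fin n × Bool)} (hb : b ∈ boxSet C jpos jneg) :
    ∃ r : ℕ, b.1.2.1 = (r : ℝ) ∧ 1 ≤ r ∧
      r ≤ 2 * n + sCount C true n + sCount C false n := by
  simp only [boxSet, Set.mem_setOf_eq] at hb
  rcases hb with ⟨i, rfl⟩ | ⟨i, rfl⟩ | ⟨i, rfl⟩ | ⟨i, j, hj1, hj2, rfl⟩ | ⟨i, rfl⟩ |
    ⟨i, j, hj1, hj2, rfl⟩ | ⟨i, h, hch, rfl⟩ | ⟨i, h, hch, rfl⟩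
  · exact ⟨(i : ℕ) + 1, by push_cast; ring, by omega, by have := i.isLt; omega⟩
  · exact ⟨(i : ℕ) + 1 + n + sCount C true n, by push_cast; ring, by omega,
      by have := i.isLt; omega⟩
  · exact ⟨(i : ℕ) + 1, by push_cast; ring, by omega, by have := i.isLt; omega⟩
  · exact ⟨n + sCount C true i + j, by push_cast; ring, by omega,
      by have := sCount_succ_le C true i; omega⟩
  · exact ⟨n + sCount C true n + (i : ℕ) + 1, by push_cast; ring, by omega,
      by have := i.isLt; omega⟩
  · exact ⟨2 * n + sCount C true n + sCount C false i + j, by push_cast; ring, by omega,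
      by have := sCount_succ_le C false i; omega⟩
  · have fb := Set.mem_Icc.mp ((hjpos i).mapsTo hch)
    have := sCount_succ_le C true i
    exact ⟨n + sCount C true i + jpos i h, by push_cast; ring, by omega, by omega⟩
  · have fb := Set.mem_Icc.mp ((hjneg i).mapsTo hch)
    have := sCount_succ_le C false i
    exact ⟨2 * n + sCount C true n + sCount C false i + jneg i h, by push_cast; ring,
      by omega, by omega⟩

lemma box_exists {n m : ℕ} (C : Clauses n m) (jpos jneg : Fin n → Fin m → ℕ)
    (hjpos : ∀ i : Fin n,
      Set.BijOn (jpos i) {h : Fin m | (i, true) ∈ C h} (Set.Icc 1 (litCount C i true)))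
    (hjneg : ∀ i : Fin n,
      Set.BijOn (jneg i) {h : Fin m | (i, false) ∈ C h} (Set.Icc 1 (litCount C i false)))
    (r : ℕ) (h1 : 1 ≤ r) (h2 : r ≤ 2 * n + sCount C true n + sCount C false n) :
    ∃ v : Fin n, ∃ b1 b2 : (ℝ × ℝ × ℝ) × (Fin n × Bool),
      b1 ∈ boxSet C jpos jneg ∧ b2 ∈ boxSet C jpos jneg ∧
      b1.1.2.1 = (r : ℝ) ∧ b2.1.2.1 = (r : ℝ) ∧ b1.2 = (v, true) ∧ b2.2 = (v, false) := by
  by_cases hr1 : r ≤ n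
  · have hn : r - 1 < n := by omega
    set i : Fin n := ⟨r - 1, hn⟩ with hi
    have hv : (i : ℕ) = r - 1 := rfl
    refine ⟨i, (((1 + n + sCount C true i : ℝ), ((i : ℕ) + 1 : ℝ),
          (litCount C i true : ℝ)), (i, true)),
      ((((i : ℕ) + 1 : ℝ), ((i : ℕ) + 1 : ℝ), 1), (i, false)),
      Or.inr (Or.inr (Or.inl ⟨i, rfl⟩)), Or.inl ⟨i, rfl⟩, ?_, ?_, rfl, rfl⟩
    · show ((i : ℕ) : ℝ) + 1 = (r : ℝ); norm_cast; omega
    · show ((i : ℕ) : ℝ) + 1 = (r : ℝ); norm_cast; omega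
  · by_cases hr2 : r ≤ n + sCount C true n
    · obtain ⟨i, j, hj1, hj2, hsum⟩ := exists_decomp C true (t := r - n) (by omega) (by omega)
      obtain ⟨h, hh, hjh⟩ := (hjpos i).surjOn (Set.mem_Icc.mpr ⟨hj1, hj2⟩)
      refine ⟨i,
        (((n + sCount C true n + sCount C false n + (h : ℕ) + 1 : ℝ),
          (n + sCount C true i + jpos i h : ℝ), 1), (i, true)),
        (((n + sCount C true i + j : ℝ), (n + sCount C true i + j : ℝ), 1), (i, false)),
        Or.inr (Or.inr (Or.inr (Or.inr (Or.inr (Or.inr (Or.inl ⟨i, h, hh, rfl⟩)))))),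
        Or.inr (Or.inr (Or.inr (Or.inl ⟨i, j, hj1, hj2, rfl⟩))), ?_, ?_, rfl, rfl⟩
      · show ((n : ℝ) + (sCount C true i : ℝ) + (jpos i h : ℝ)) = (r : ℝ)
        norm_cast; omega
      · show ((n : ℝ) + (sCount C true i : ℝ) + (j : ℝ)) = (r : ℝ)
        norm_cast; omega
    · by_cases hr3 : r ≤ 2 * n + sCount C true n
      · have hn : r - n - sCount C true n - 1 < n := by omega
        set i : Fin n := ⟨r - n - sCount C true n - 1, hn⟩ with hi
        have hv : (i : ℕ) = r - n - sCount C true n - 1 := rfl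
        refine ⟨i,
          ((((i : ℕ) + 1 : ℝ), ((i : ℕ) + 1 + n + sCount C true n : ℝ), 1), (i, true)),
          (((1 + n + sCount C true n + sCount C false i : ℝ),
            (n + sCount C true n + (i : ℕ) + 1 : ℝ),
            (litCount C i false : ℝ)), (i, false)),
          Or.inr (Or.inl ⟨i, rfl⟩),
          Or.inr (Or.inr (Or.inr (Or.inr (Or.inl ⟨i, rfl⟩)))), ?_, ?_, rfl, rfl⟩
        · show ((i : ℕ) : ℝ) + 1 + (n : ℝ) + (sCount C true n : ℝ) = (r : ℝ)
          norm_cast; omega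
        · show ((n : ℝ) + (sCount C true n : ℝ) + ((i : ℕ) : ℝ) + 1) = (r : ℝ)
          norm_cast; omega
      · obtain ⟨i, j, hj1, hj2, hsum⟩ := exists_decomp C false
          (t := r - 2 * n - sCount C true n) (by omega) (by omega)
        obtain ⟨h, hh, hjh⟩ := (hjneg i).surjOn (Set.mem_Icc.mpr ⟨hj1, hj2⟩)
        refine ⟨i,
          (((n + sCount C true n + sCount C false i + j : ℝ),
            (2 * n + sCount C true n + sCount C false i + j : ℝ), 1), (i, true)),
          (((n + sCount C true n + sCount C false n + (h : ℕ) + 1 : ℝ),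
            (2 * n + sCount C true n + sCount C false i + jneg i h : ℝ), 1), (i, false)),
          Or.inr (Or.inr (Or.inr (Or.inr (Or.inr (Or.inl ⟨i, j, hj1, hj2, rfl⟩))))),
          Or.inr (Or.inr (Or.inr (Or.inr (Or.inr (Or.inr (Or.inr ⟨i, h, hh, rfl⟩)))))),
          ?_, ?_, rfl, rfl⟩
        · show (2 * (n : ℝ) + (sCount C true n : ℝ) + (sCount C false i : ℝ) + (j : ℝ)) = (r : ℝ)
          norm_cast; omega
        · show (2 * (n : ℝ) + (sCount C true n : ℝ) + (sCount C false i : ℝ) + (jneg i h : ℝ)) = (r : ℝ)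
          norm_cast; omega


lemma Ioo_sub_eq (a : ℕ) (y : ℝ) (h : Set.Ioo (a : ℝ) ((a : ℝ) + 1) ⊆ Set.Icc y (y + 1)) :
    y = (a : ℝ) := by
  have hcl : Set.Icc (a : ℝ) ((a : ℝ) + 1) ⊆ Set.Icc y (y + 1) := by
    rw [← closure_Ioo (show (a : ℝ) ≠ (a : ℝ) + 1 by norm_num)]
    exact closure_minimal h isClosed_Icc
  have h2 := (Set.Icc_subset_Icc_iff (by norm_num : (a : ℝ) ≤ (a : ℝ) + 1)).mp hcl
  linarith [h2.1, h2.2]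

/-- In the box-problem construction, the total number of boxes equals
`4n + 2(m₁ + 2m₂ + 3m₃) = 2k` where `k = 2n + m₁ + 2m₂ + 3m₃`; moreover every unit
interval `(i, i+1)` with `i ∈ {1, …, 2n+s⁺_n+s⁻_n}` on the left edge of the
bounding box can be covered by exactly two boxes, one labelled `v` and the other
labelled `¬v` for the same variable `v`. -/
theorem boxProblem_count_and_left_edge
    (n m : ℕ) (C : Clauses n m)
    (hsize : ∀ h : Fin m, (C h).card ≤ 3)
    (hne : ∀ h : Fin m, (C h).Nonempty)
    (hocc : ∀ i : Fin n, (∃ h : Fin m, (i, true) ∈ C h) ∧ (∃ h : Fin m, (i, false) ∈ C h))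
    (jpos jneg : Fin n → Fin m → ℕ)
    (hjpos : ∀ i : Fin n,
      Set.BijOn (jpos i) {h : Fin m | (i, true) ∈ C h} (Set.Icc 1 (litCount C i true)))
    (hjneg : ∀ i : Fin n,
      Set.BijOn (jneg i) {h : Fin m | (i, false) ∈ C h} (Set.Icc 1 (litCount C i false))) :
    ((boxSet C jpos jneg).ncard
        = 4 * n + 2 * (clauseCount C 1 + 2 * clauseCount C 2 + 3 * clauseCount C 3) ∧
      4 * n + 2 * (clauseCount C 1 + 2 * clauseCount C 2 + 3 * clauseCount C 3)
        = 2 * (2 * n + clauseCount C 1 + 2 * clauseCount C 2 + 3 * clauseCount C 3)) ∧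
    ∀ i : ℕ, 1 ≤ i → i ≤ 2 * n + sCount C true n + sCount C false n →
      ∃ v : Fin n, ∃ b1 b2 : (ℝ × ℝ × ℝ) × (Fin n × Bool),
        b1 ∈ boxSet C jpos jneg ∧ b2 ∈ boxSet C jpos jneg ∧ b1 ≠ b2 ∧
        Set.Ioo (i : ℝ) (i + 1) ⊆ Set.Icc b1.1.2.1 (b1.1.2.1 + 1) ∧
        Set.Ioo (i : ℝ) (i + 1) ⊆ Set.Icc b2.1.2.1 (b2.1.2.1 + 1) ∧
        b1.2 = (v, true) ∧ b2.2 = (v, false) ∧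
        ∀ b ∈ boxSet C jpos jneg,
          Set.Ioo (i : ℝ) (i + 1) ⊆ Set.Icc b.1.2.1 (b.1.2.1 + 1) → b = b1 ∨ b = b2 := by
  have htot : sCount C true n + sCount C false n
      = clauseCount C 1 + 2 * clauseCount C 2 + 3 * clauseCount C 3 :=
    (sCount_total C).trans (sum_card_eq C hsize hne)
  set R := 2 * n + sCount C true n + sCount C false n with hR
  constructor
  · constructor
    · have hinj : Set.InjOn (fun b : (ℝ × ℝ × ℝ) × (Fin n × Bool) => (b.1.2.1, b.2.2))
          (boxSet C jpos jneg) := by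
        intro b hb b' hb' he
        simp only [Prod.mk.injEq] at he
        exact box_uniq C jpos jneg hjpos hjneg hb hb' he.1 he.2
      have hcast_inj : Function.Injective (fun p : ℕ × Bool => ((p.1 : ℝ), p.2)) := by
        intro p q h
        simp only [Prod.ext_iff] at h ⊢
        exact ⟨Nat.cast_injective h.1, h.2⟩
      have himg : (fun b : (ℝ × ℝ × ℝ) × (Fin n × Bool) => (b.1.2.1, b.2.2)) ''
            boxSet C jpos jneg
          = (fun p : ℕ × Bool => ((p.1 : ℝ), p.2)) ''
            ↑(Finset.Icc 1 R ×ˢ (Finset.univ : Finset Bool)) := by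
        ext p
        constructor
        · rintro ⟨b, hb, rfl⟩
          obtain ⟨r, hr, h1, h2⟩ := box_range C jpos jneg hjpos hjneg hb
          exact ⟨(r, b.2.2), by simp [Finset.mem_Icc]; omega, by simp [hr]⟩
        · rintro ⟨⟨r, s⟩, hrs, rfl⟩
          simp only [Finset.coe_product, Set.mem_prod, Finset.mem_coe, Finset.mem_Icc,
            Finset.mem_univ, and_true] at hrs
          obtain ⟨v, b1, b2, hb1, hb2, hy1, hy2, hs1, hs2⟩ :=
            box_exists C jpos jneg hjpos hjneg r hrs.1 hrs.2
          cases s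
          · exact ⟨b2, hb2, by simp [hy2, hs2]⟩
          · exact ⟨b1, hb1, by simp [hy1, hs1]⟩
      have := Set.ncard_image_of_injOn hinj
      rw [himg, ← Finset.coe_image, Set.ncard_coe_finset,
        Finset.card_image_of_injective _ hcast_inj, Finset.card_product, Nat.card_Icc,
        Finset.card_univ, Fintype.card_bool] at this
      rw [← this]
      omega
    · omega
  · intro i hi1 hi2
    obtain ⟨v, b1, b2, hb1, hb2, hy1, hy2, hs1, hs2⟩ :=
      box_exists C jpos jneg hjpos hjneg i hi1 hi2
    refine ⟨v, b1, b2, hb1, hb2, ?_, ?_, ?_, hs1, hs2, ?_⟩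
    · intro h
      rw [h, hs2] at hs1
      simp at hs1
    · rw [hy1]; exact Set.Ioo_subset_Icc_self
    · rw [hy2]; exact Set.Ioo_subset_Icc_self
    · intro b hb hsub
      have hby : b.1.2.1 = (i : ℝ) := Ioo_sub_eq i _ hsub
      cases hsb : b.2.2
      · exact Or.inr (box_uniq C jpos jneg hjpos hjneg hb hb2
          (by rw [hby, hy2]) (by rw [hsb, hs2]))
      · exact Or.inl (box_uniq C jpos jneg hjpos hjneg hb hb1
          (by rw [hby, hy1]) (by rw [hsb, hs1]))
end
end
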